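/- arXiv:2004.01599 — 4 statements merged into one kernel-verified Lean document; each statement's English description precedes it below -/
import Mathlib

section
/- Let 𝒪 be a finite family of pairwise disjoint closed axis-parallel rectangles in ℝ² (obstacles). Let p, q ∈ ℝ² lie outside the interior of every obstacle, and let o be any point of the rectangle B(p,q) that lies outside the interior of every obstacle. Then σ₁(p,o) + σ₁(o,q) ≤ 3·σ₁(p,q), where σ₁ denotes the L1-geodesic distance amid the obstacles. -/
open scoped ENNReal

namespace GeoSpanner

/-- Points of `ℝ^d`. -/
abbrev Pt (d : ℕ) := Fin d → ℝ

/-- The L1 norm `‖x‖₁ = ∑ |xᵢ|`. -/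
def nrm1 {d : ℕ} (x : Pt d) : ℝ := ∑ i, |x i|

/-- The Euclidean (L2) norm. -/
noncomputable def nrm2 {d : ℕ} (x : Pt d) : ℝ := Real.sqrt (∑ i, (x i) ^ 2)

/-- An axis-parallel box: a product of closed bounded intervals. -/
def IsBox {d : ℕ} (B : Set (Pt d)) : Prop := ∃ a b : Pt d, a ≤ b ∧ B = Set.Icc a b

/-- A valid family of obstacles: finitely many pairwise disjoint closed
axis-parallel boxes. -/
def IsObstacleFamily {d : ℕ} (O : Finset (Set (Pt d))) : Prop :=
  (∀ B ∈ O, IsBox B) ∧ (O : Set (Set (Pt d))).Pairwise Disjoint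

/-- The free space: points outside the interior of every obstacle. -/
def free {d : ℕ} (O : Finset (Set (Pt d))) : Set (Pt d) :=
  {x | ∀ B ∈ O, x ∉ interior B}

/-- Length of the path `γ` restricted to `[0,1]`, measured as total variation
with respect to the norm `nrm`. -/
noncomputable def pathLen {d : ℕ} (nrm : Pt d → ℝ) (γ : ℝ → Pt d) : ℝ≥0∞ :=
  ⨆ (n : ℕ) (t : Fin (n + 1) → ℝ)
    (_ : Monotone t ∧ ∀ i, t i ∈ Set.Icc (0 : ℝ) 1),
      ∑ i : Fin n, ENNReal.ofReal (nrm (γ (t i.succ) - γ (t i.castSucc)))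

/-- `γ` is a continuous path from `p` to `q` staying inside the region `F`. -/
def IsPathIn {d : ℕ} (F : Set (Pt d)) (p q : Pt d) (γ : ℝ → Pt d) : Prop :=
  ContinuousOn γ (Set.Icc 0 1) ∧ γ 0 = p ∧ γ 1 = q ∧
    ∀ t ∈ Set.Icc (0 : ℝ) 1, γ t ∈ F

/-- Geodesic distance from `p` to `q` inside the region `F`, with path lengths
measured with respect to the norm `nrm`. -/
noncomputable def geo {d : ℕ} (nrm : Pt d → ℝ) (F : Set (Pt d)) (p q : Pt d) : ℝ≥0∞ :=
  ⨅ (γ : ℝ → Pt d) (_ : IsPathIn F p q γ), pathLen nrm γ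

/-- `B(p,q)`: the closed axis-parallel box with opposite corners `p` and `q`. -/
def corners {d : ℕ} (p q : Pt d) : Set (Pt d) := Set.uIcc p q

/-- Graph distance over the edge set `E` with edge weights given by `σ`. -/
noncomputable def graphDist {d : ℕ} (σ : Pt d → Pt d → ℝ≥0∞) (E : Set (Sym2 (Pt d)))
    (p q : Pt d) : ℝ≥0∞ :=
  ⨅ (n : ℕ) (x : Fin (n + 1) → Pt d)
    (_ : x 0 = p ∧ x (Fin.last n) = q ∧ ∀ i : Fin n, s(x i.castSucc, x i.succ) ∈ E),
      ∑ i : Fin n, σ (x i.castSucc) (x i.succ)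

end GeoSpanner

namespace GeoSpanner

noncomputable def κ : Pt 2 → PiLp 1 (fun _ : Fin 2 => ℝ) := (WithLp.equiv 1 (Fin 2 → ℝ)).symm

lemma nrm1_two (x : Pt 2) : nrm1 x = |x 0| + |x 1| := by
  simp [nrm1, Fin.sum_univ_two]

lemma edist_κ (x y : Pt 2) : edist (κ x) (κ y) = ENNReal.ofReal (nrm1 (x - y)) := by
  rw [PiLp.edist_eq_sum (by norm_num : (0:ℝ) < (1 : ℝ≥0∞).toReal)]
  simp only [ENNReal.toReal_one, ENNReal.rpow_one, one_div, inv_one]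
  rw [Fin.sum_univ_two, nrm1_two]
  have h : ∀ i : Fin 2, edist (κ x i) (κ y i) = ENNReal.ofReal |x i - y i| := by
    intro i
    rw [edist_dist, Real.dist_eq]
    rfl
  rw [h 0, h 1, ← ENNReal.ofReal_add (abs_nonneg _) (abs_nonneg _)]
  simp [Pi.sub_apply]

lemma pathLen_eq (γ : ℝ → Pt 2) :
    pathLen nrm1 γ = eVariationOn (κ ∘ γ) (Set.Icc 0 1) := by
  apply le_antisymm
  · refine iSup_le fun n => iSup_le fun t => iSup_le fun ht => ?_
    have hn : ∀ j : ℕ, min j n < n + 1 := fun j => lt_of_le_of_lt (min_le_right _ _) (Nat.lt_succ_self n)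
    set u : ℕ → ℝ := fun j => t ⟨min j n, hn j⟩ with hu_def
    have hu : Monotone u := by
      intro a b hab
      exact ht.1 (by simp [Fin.le_def, min_le_min_right, hab] : (⟨min a n, hn a⟩ : Fin (n+1)) ≤ ⟨min b n, hn b⟩)
    have hus : ∀ i, u i ∈ Set.Icc (0:ℝ) 1 := fun i => ht.2 _
    have key : (∑ i : Fin n, ENNReal.ofReal (nrm1 (γ (t i.succ) - γ (t i.castSucc))))
        = ∑ i ∈ Finset.range n, edist ((κ ∘ γ) (u (i + 1))) ((κ ∘ γ) (u i)) := by
      rw [← Fin.sum_univ_eq_sum_range (fun i => edist ((κ ∘ γ) (u (i + 1))) ((κ ∘ γ) (u i))) n]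
      refine Finset.sum_congr rfl fun i _ => ?_
      have h1 : u (↑i) = t i.castSucc := by
        simp only [hu_def]
        congr 1
        exact Fin.ext (by simp [Nat.min_eq_left (le_of_lt i.isLt)] )
      have h2 : u (↑i + 1) = t i.succ := by
        simp only [hu_def]
        congr 1
        exact Fin.ext (by simp [Nat.min_eq_left (Nat.succ_le_of_lt i.isLt)])
      rw [h1, h2, Function.comp_apply, Function.comp_apply, edist_κ]
    rw [key]
    exact eVariationOn.sum_le hu hus
  · refine iSup_le fun p => ?_
    obtain ⟨n, ⟨u, hu, hus⟩⟩ := p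
    have key : (∑ i ∈ Finset.range n, edist ((κ ∘ γ) (u (i + 1))) ((κ ∘ γ) (u i)))
        = ∑ i : Fin n, ENNReal.ofReal (nrm1 (γ ((fun j : Fin (n+1) => u j) i.succ)
            - γ ((fun j : Fin (n+1) => u j) i.castSucc))) := by
      rw [← Fin.sum_univ_eq_sum_range (fun i => edist ((κ ∘ γ) (u (i + 1))) ((κ ∘ γ) (u i))) n]
      refine Finset.sum_congr rfl fun i _ => ?_
      simp only [Fin.coe_castSucc, Fin.val_succ, Function.comp_apply]
      rw [edist_κ]
    dsimp only
    rw [key]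
    refine le_iSup_of_le n (le_iSup_of_le (fun j : Fin (n+1) => u j) (le_iSup_of_le ⟨fun a b hab => hu hab, fun i => hus i⟩ le_rfl))



def uu (z : Pt 2) : ℝ := z 0 + z 1
def vv (z : Pt 2) : ℝ := z 1 - z 0

lemma pt_eq_of_uv {a b : Pt 2} (h1 : uu a = uu b) (h2 : vv a = vv b) : a = b := by
  simp only [uu, vv] at h1 h2
  have h0 : a 0 = b 0 := by linarith
  have h3 : a 1 = b 1 := by linarith
  funext i
  fin_cases i
  · exact h0
  · exact h3

def mv (w : Pt 2) (b : Bool) (r : ℝ) : Pt 2 := if b then ![w 0, w 1 + r] else ![w 0 - r, w 1]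

@[simp] lemma mv_zero (w : Pt 2) (b : Bool) (r : ℝ) :
    mv w b r 0 = if b then w 0 else w 0 - r := by
  cases b <;> simp [mv]

@[simp] lemma mv_one (w : Pt 2) (b : Bool) (r : ℝ) :
    mv w b r 1 = if b then w 1 + r else w 1 := by
  cases b <;> simp [mv]

lemma mv_vv (w : Pt 2) (b : Bool) (r : ℝ) : vv (mv w b r) = vv w + r := by
  cases b <;> simp [vv] <;> ring

lemma mv_self (w : Pt 2) (b : Bool) : mv w b 0 = w := by
  cases b <;> (unfold mv; simp; funext i; fin_cases i <;> simp)

noncomputable def walk : List (Bool × ℝ) → Pt 2 → ℝ → Pt 2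
  | [], w, v => mv w true (max (v - vv w) 0)
  | (b, r) :: l, w, v =>
      if v ≤ vv w + r then mv w b (min (max (v - vv w) 0) r) else walk l (mv w b r) v

def okL (l : List (Bool × ℝ)) : Prop := ∀ x ∈ l, 0 ≤ x.2

lemma okL_nil : okL [] := by intro x hx; simp at hx

lemma okL_cons {b : Bool} {r : ℝ} {l : List (Bool × ℝ)} (h : okL ((b, r) :: l)) :
    0 ≤ r ∧ okL l := by
  constructor
  · exact h (b, r) List.mem_cons_self
  · intro x hx; exact h x (List.mem_cons_of_mem _ hx)

lemma walk_start : ∀ (l : List (Bool × ℝ)) (w : Pt 2) (v : ℝ), okL l → v ≤ vv w →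
    walk l w v = w
  | [], w, v, _, hv => by
      simp only [walk]
      rw [max_eq_right (by linarith), mv_self]
  | (b, r) :: l, w, v, hok, hv => by
      obtain ⟨hr, _⟩ := okL_cons hok
      simp only [walk]
      rw [if_pos (by linarith), max_eq_right (by linarith), min_eq_left hr, mv_self]

lemma walk_vv : ∀ (l : List (Bool × ℝ)) (w : Pt 2) (v : ℝ), okL l →
    vv (walk l w v) = max v (vv w)
  | [], w, v, _ => by
      simp only [walk]
      rw [mv_vv]
      rcases le_total v (vv w) with h | h
      · rw [max_eq_right (by linarith), max_eq_right h]; ring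
      · rw [max_eq_left (by linarith), max_eq_left h]; ring
  | (b, r) :: l, w, v, hok => by
      obtain ⟨hr, hok'⟩ := okL_cons hok
      simp only [walk]
      by_cases h : v ≤ vv w + r
      · rw [if_pos h, mv_vv]
        rcases le_total v (vv w) with h2 | h2
        · rw [max_eq_right (by linarith), min_eq_left hr, max_eq_right h2]; ring
        · rw [max_eq_left (by linarith), min_eq_left (by linarith), max_eq_left h2]; ring
      · rw [if_neg h, walk_vv l _ v hok', mv_vv]
        push_neg at h
        rw [max_eq_left (by linarith), max_eq_left (by linarith)]



lemma cont_pair {f g : ℝ → ℝ} (hf : Continuous f) (hg : Continuous g) :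
    Continuous fun v => (![f v, g v] : Pt 2) := by
  refine continuous_pi fun i => ?_
  fin_cases i
  · simpa using hf
  · simpa using hg

lemma walk_x_le : ∀ (l : List (Bool × ℝ)) (w : Pt 2) (v : ℝ), okL l → (walk l w v) 0 ≤ w 0
  | [], w, v, _ => by simp only [walk, mv_zero, if_true]; exact le_rfl
  | (b, r) :: l, w, v, hok => by
      obtain ⟨hr, hok'⟩ := okL_cons hok
      simp only [walk]
      by_cases h : v ≤ vv w + r
      · rw [if_pos h, mv_zero]
        cases b
        · simp only [Bool.false_eq_true, if_false]
          have : (0:ℝ) ≤ min (max (v - vv w) 0) r := le_min (le_max_right _ _) hr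
          linarith
        · simp
      · rw [if_neg h]
        refine le_trans (walk_x_le l _ v hok') ?_
        rw [mv_zero]
        cases b
        · simp only [Bool.false_eq_true, if_false]; linarith
        · simp

lemma walk_y_ge : ∀ (l : List (Bool × ℝ)) (w : Pt 2) (v : ℝ), okL l → w 1 ≤ (walk l w v) 1
  | [], w, v, _ => by
      simp only [walk, mv_one, if_true]
      have := le_max_right (v - vv w) 0
      linarith
  | (b, r) :: l, w, v, hok => by
      obtain ⟨hr, hok'⟩ := okL_cons hok
      simp only [walk]
      by_cases h : v ≤ vv w + r
      · rw [if_pos h, mv_one]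
        cases b
        · simp
        · simp only [if_true]
          have : (0:ℝ) ≤ min (max (v - vv w) 0) r := le_min (le_max_right _ _) hr
          linarith
      · rw [if_neg h]
        refine le_trans ?_ (walk_y_ge l _ v hok')
        rw [mv_one]
        cases b
        · simp
        · simp only [if_true]; linarith

lemma walk_x_anti : ∀ (l : List (Bool × ℝ)) (w : Pt 2) (v v' : ℝ), okL l → v ≤ v' →
    (walk l w v') 0 ≤ (walk l w v) 0
  | [], w, v, v', _, _ => by simp only [walk, mv_zero, if_true]; exact le_rfl
  | (b, r) :: l, w, v, v', hok, hvv => by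
      obtain ⟨hr, hok'⟩ := okL_cons hok
      simp only [walk]
      by_cases h' : v' ≤ vv w + r
      · rw [if_pos h', if_pos (le_trans hvv h'), mv_zero, mv_zero]
        cases b
        · simp only [Bool.false_eq_true, if_false]
          have : min (max (v - vv w) 0) r ≤ min (max (v' - vv w) 0) r :=
            min_le_min_right _ (max_le_max_right _ (by linarith))
          linarith
        · simp
      · rw [if_neg h']
        by_cases h : v ≤ vv w + r
        · rw [if_pos h, mv_zero]
          refine le_trans (walk_x_le l _ v' hok') ?_
          rw [mv_zero]
          cases b
          · simp only [Bool.false_eq_true, if_false]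
            have : min (max (v - vv w) 0) r ≤ r := min_le_right _ _
            linarith
          · simp
        · rw [if_neg h]
          exact walk_x_anti l _ v v' hok' hvv

lemma walk_y_mono : ∀ (l : List (Bool × ℝ)) (w : Pt 2) (v v' : ℝ), okL l → v ≤ v' →
    (walk l w v) 1 ≤ (walk l w v') 1
  | [], w, v, v', _, hvv => by
      simp only [walk, mv_one, if_true]
      have : max (v - vv w) 0 ≤ max (v' - vv w) 0 := max_le_max_right _ (by linarith)
      linarith
  | (b, r) :: l, w, v, v', hok, hvv => by
      obtain ⟨hr, hok'⟩ := okL_cons hok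
      simp only [walk]
      by_cases h' : v' ≤ vv w + r
      · rw [if_pos h', if_pos (le_trans hvv h'), mv_one, mv_one]
        cases b
        · simp
        · simp only [if_true]
          have : min (max (v - vv w) 0) r ≤ min (max (v' - vv w) 0) r :=
            min_le_min_right _ (max_le_max_right _ (by linarith))
          linarith
      · rw [if_neg h']
        by_cases h : v ≤ vv w + r
        · rw [if_pos h, mv_one]
          refine le_trans ?_ (walk_y_ge l _ v' hok')
          rw [mv_one]
          cases b
          · simp
          · simp only [if_true]
            have : min (max (v - vv w) 0) r ≤ r := min_le_right _ _
            linarith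
        · rw [if_neg h]
          exact walk_y_mono l _ v v' hok' hvv

lemma walk_cont : ∀ (l : List (Bool × ℝ)) (w : Pt 2), okL l → Continuous fun v => walk l w v
  | [], w, _ => by
      simp only [walk]
      have : Continuous fun v => max (v - vv w) 0 := by fun_prop
      unfold mv
      simp only [if_true]
      exact cont_pair (by fun_prop) (by fun_prop)
  | (b, r) :: l, w, hok => by
      obtain ⟨hr, hok'⟩ := okL_cons hok
      simp only [walk]
      have hf' : Continuous fun v => mv w b (min (max (v - vv w) 0) r) := by
        cases b
        · unfold mv; simp only [Bool.false_eq_true, if_false]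
          exact cont_pair (by fun_prop) (by fun_prop)
        · unfold mv; simp only [if_true]
          exact cont_pair (by fun_prop) (by fun_prop)
      refine Continuous.if_le hf' (walk_cont l _ hok') continuous_id continuous_const ?_
      intro v hv
      rw [walk_start l _ v hok' (by rw [mv_vv]; linarith)]
      congr 1
      rw [hv, max_eq_left (by linarith)]
      have : vv w + r - vv w = r := by ring
      rw [this, min_self]



def inB (d : Pt 2 × Pt 2) (z : Pt 2) : Prop :=
  d.1 0 ≤ z 0 ∧ z 0 ≤ d.2 0 ∧ d.1 1 ≤ z 1 ∧ z 1 ≤ d.2 1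

def inO (d : Pt 2 × Pt 2) (z : Pt 2) : Prop :=
  d.1 0 < z 0 ∧ z 0 < d.2 0 ∧ d.1 1 < z 1 ∧ z 1 < d.2 1

lemma inO_inB {d z} (h : inO d z) : inB d z :=
  ⟨h.1.le, h.2.1.le, h.2.2.1.le, h.2.2.2.le⟩

def FD (D : Finset (Pt 2 × Pt 2)) : Set (Pt 2) := {x | ∀ d ∈ D, ¬ inO d x}

def GoodD (D : Finset (Pt 2 × Pt 2)) : Prop :=
  (∀ d ∈ D, d.1 ≤ d.2) ∧ ∀ d ∈ D, ∀ d' ∈ D, d ≠ d' → ∀ z, inB d z → ¬ inB d' z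

def blk (w : Pt 2) (d : Pt 2 × Pt 2) : Prop :=
  d.1 0 < w 0 ∧ w 0 < d.2 0 ∧ d.1 1 < d.2 1 ∧ w 1 ≤ d.1 1

open Classical in
noncomputable def pick (D : Finset (Pt 2 × Pt 2)) (w : Pt 2)
    (h : (D.filter (fun d => blk w d)).Nonempty) : Pt 2 × Pt 2 :=
  (Finset.exists_min_image (D.filter (fun d => blk w d)) (fun d => d.1 1) h).choose

open Classical in
lemma pick_spec (D : Finset (Pt 2 × Pt 2)) (w : Pt 2)
    (h : (D.filter (fun d => blk w d)).Nonempty) :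
    (pick D w h ∈ D ∧ blk w (pick D w h)) ∧
      ∀ d ∈ D, blk w d → (pick D w h).1 1 ≤ d.1 1 := by
  have := (Finset.exists_min_image (D.filter (fun d => blk w d)) (fun d => d.1 1) h).choose_spec
  rw [show (Finset.exists_min_image (D.filter (fun d => blk w d)) (fun d => d.1 1) h).choose
      = pick D w h from rfl] at this
  obtain ⟨hmem, hmin⟩ := this
  rw [Finset.mem_filter] at hmem
  refine ⟨hmem, fun d hd hbd => hmin d ?_⟩
  rw [Finset.mem_filter]; exact ⟨hd, hbd⟩

open Classical in
noncomputable def construct : ℕ → Finset (Pt 2 × Pt 2) → Pt 2 → List (Bool × ℝ)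
  | 0, _, _ => []
  | (n+1), D, w =>
      if h : (D.filter (fun d => blk w d)).Nonempty then
        (true, (pick D w h).1 1 - w 1) :: (false, w 0 - (pick D w h).1 0) ::
          construct n (D.erase (pick D w h))
            (mv (mv w true ((pick D w h).1 1 - w 1)) false (w 0 - (pick D w h).1 0))
      else []

lemma ray_free {Df : Finset (Pt 2 × Pt 2)} {w : Pt 2} (hw : w ∈ FD Df)
    (h : ∀ d ∈ Df, ¬ blk w d) {m : ℝ} (hm : 0 ≤ m) : (![w 0, w 1 + m] : Pt 2) ∈ FD Df := by
  intro d hd hO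
  obtain ⟨h1, h2, h3, h4⟩ := hO
  simp only [Matrix.cons_val_zero, Matrix.cons_val_one, Matrix.head_cons] at h1 h2 h3 h4
  have hnb := h d hd
  unfold blk at hnb
  push_neg at hnb
  have h5 : d.1 1 < w 1 := lt_of_not_ge fun hc => by
    exact absurd (hnb h1 h2 (lt_trans h3 h4)) (not_lt.mpr hc)
  have := hw d hd
  unfold inO at this
  push_neg at this
  have h6 : d.2 1 ≤ w 1 := this h1 h2 h5
  linarith



lemma construct_spec : ∀ (n : ℕ) (D Df : Finset (Pt 2 × Pt 2)) (w : Pt 2),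
    GoodD Df → D ⊆ Df → D.card ≤ n → w ∈ FD Df →
    (∀ d ∈ Df, d ∉ D → w 0 ≤ d.1 0) →
    okL (construct n D w) ∧ ∀ v, walk (construct n D w) w v ∈ FD Df
  | 0, D, Df, w, hGood, hsub, hcard, hw, hinv => by
      have hD0 : D = ∅ := Finset.card_eq_zero.mp (Nat.le_zero.mp hcard)
      refine ⟨okL_nil, fun v => ?_⟩
      simp only [construct, walk]
      have e : mv w true (max (v - vv w) 0) = ![w 0, w 1 + max (v - vv w) 0] := by simp [mv]
      rw [e]
      refine ray_free hw (fun d hd hb => ?_) (le_max_right _ _)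
      have : w 0 ≤ d.1 0 := hinv d hd (by simp [hD0])
      exact absurd hb.1 (not_lt.mpr this)
  | (n+1), D, Df, w, hGood, hsub, hcard, hw, hinv => by
      classical
      simp only [construct]
      by_cases hB : (D.filter (fun d => blk w d)).Nonempty
      case neg =>
        rw [dif_neg hB]
        refine ⟨okL_nil, fun v => ?_⟩
        simp only [walk]
        have e : mv w true (max (v - vv w) 0) = ![w 0, w 1 + max (v - vv w) 0] := by simp [mv]
        rw [e]
        refine ray_free hw (fun d hd hb => ?_) (le_max_right _ _)
        by_cases hdD : d ∈ D
        · exact hB ⟨d, Finset.mem_filter.mpr ⟨hdD, hb⟩⟩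
        · exact absurd hb.1 (not_lt.mpr (hinv d hd hdD))
      case pos =>
        rw [dif_pos hB]
        obtain ⟨⟨hRD, hRblk⟩, hRmin⟩ := pick_spec D w hB
        set R := pick D w hB with hR
        obtain ⟨hb1, hb2, hb3, hb4⟩ := hRblk
        set δ1 := R.1 1 - w 1 with hδ1def
        set δ2 := w 0 - R.1 0 with hδ2def
        have hδ1 : 0 ≤ δ1 := by simp [hδ1def]; linarith
        have hδ2 : 0 ≤ δ2 := by simp [hδ2def]; linarith
        have hRDf : R ∈ Df := hsub hRD
        have hR12 : R.1 1 < R.2 1 := hb3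
        -- UP segment freeness
        have hUP : ∀ c : ℝ, 0 ≤ c → c ≤ δ1 → mv w true c ∈ FD Df := by
          intro c hc0 hc1 d hd hO
          have e : mv w true c = ![w 0, w 1 + c] := by simp [mv]
          rw [e] at hO
          obtain ⟨h1, h2, h3, h4⟩ := hO
          simp only [Matrix.cons_val_zero, Matrix.cons_val_one, Matrix.head_cons] at h1 h2 h3 h4
          by_cases hdD : d ∈ D
          · by_cases hw1 : w 1 ≤ d.1 1
            · have hdblk : blk w d := ⟨h1, h2, lt_trans h3 h4, hw1⟩
              have := hRmin d hdD hdblk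
              have : R.1 1 ≤ d.1 1 := this
              have hc : w 1 + c ≤ R.1 1 := by simp [hδ1def] at hc1; linarith
              linarith
            · push_neg at hw1
              have hfree := hw d hd
              unfold inO at hfree
              push_neg at hfree
              have := hfree h1 h2 hw1
              linarith
          · exact absurd h1 (not_lt.mpr (hinv d hd hdD))
        -- SLIDE segment freeness
        have hSLIDE : ∀ c : ℝ, 0 ≤ c → c ≤ δ2 → mv (mv w true δ1) false c ∈ FD Df := by
          intro c hc0 hc1 d hd hO
          have e : mv (mv w true δ1) false c = ![w 0 - c, w 1 + δ1] := by simp [mv]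
          have hy : w 1 + δ1 = R.1 1 := by simp [hδ1def]
          have hptB : inB R (![w 0 - c, w 1 + δ1] : Pt 2) := by
            refine ⟨?_, ?_, ?_, ?_⟩ <;>
              simp only [Matrix.cons_val_zero, Matrix.cons_val_one, Matrix.head_cons]
            · simp [hδ2def] at hc1; linarith
            · linarith
            · linarith
            · linarith
          rw [e] at hO
          by_cases hdR : d = R
          · subst hdR
            have := hO.2.2.1
            simp only [Matrix.cons_val_one, Matrix.head_cons, Matrix.cons_val_zero] at this
            linarith
          · exact hGood.2 R hRDf d hd (fun hh => hdR hh.symm) _ hptB (inO_inB hO)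
        have hcorner : mv (mv w true δ1) false δ2 ∈ FD Df := hSLIDE δ2 hδ2 le_rfl
        have hcorner0 : (mv (mv w true δ1) false δ2) 0 = R.1 0 := by simp [mv, hδ2def]
        have hIH := construct_spec n (D.erase R) Df (mv (mv w true δ1) false δ2) hGood
          ((Finset.erase_subset _ _).trans hsub)
          (by
            have := Finset.card_erase_lt_of_mem hRD
            omega)
          hcorner
          (by
            intro d hd hdE
            rw [hcorner0]
            by_cases hdR : d = R
            · subst hdR; exact le_rfl
            · have hdD : d ∉ D := fun hc => hdE (Finset.mem_erase.mpr ⟨hdR, hc⟩)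
              exact le_trans hb1.le (hinv d hd hdD))
        refine ⟨?_, ?_⟩
        · intro x hx
          simp only [List.mem_cons] at hx
          rcases hx with rfl | hx
          · exact hδ1
          · rcases hx with rfl | hx
            · exact hδ2
            · exact hIH.1 x hx
        · intro v
          simp only [walk]
          by_cases h1 : v ≤ vv w + δ1
          · rw [if_pos h1]
            exact hUP _ (le_min (le_max_right _ _) hδ1) (min_le_right _ _)
          · rw [if_neg h1]
            by_cases h2 : v ≤ vv (mv w true δ1) + δ2
            · rw [if_pos h2]
              exact hSLIDE _ (le_min (le_max_right _ _) hδ2) (min_le_right _ _)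
            · rw [if_neg h2]
              exact hIH.2 v



lemma vv_neg (z : Pt 2) : vv (-z) = - vv z := by simp [vv]; ring
lemma uu_neg (z : Pt 2) : uu (-z) = - uu z := by simp [uu]; ring

noncomputable def negD (D : Finset (Pt 2 × Pt 2)) : Finset (Pt 2 × Pt 2) :=
  D.image (fun d => (-d.2, -d.1))

lemma inO_negD (d : Pt 2 × Pt 2) (z : Pt 2) : inO (-d.2, -d.1) z ↔ inO d (-z) := by
  unfold inO
  simp only [Pi.neg_apply]
  constructor <;> (intro ⟨a, b, c, e⟩; refine ⟨by linarith, by linarith, by linarith, by linarith⟩)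

lemma inB_negD (d : Pt 2 × Pt 2) (z : Pt 2) : inB (-d.2, -d.1) z ↔ inB d (-z) := by
  unfold inB
  simp only [Pi.neg_apply]
  constructor <;> (intro ⟨a, b, c, e⟩; refine ⟨by linarith, by linarith, by linarith, by linarith⟩)

lemma FD_negD {D : Finset (Pt 2 × Pt 2)} {x : Pt 2} : x ∈ FD (negD D) ↔ -x ∈ FD D := by
  constructor
  · intro h d hd hO
    refine h (-d.2, -d.1) (Finset.mem_image.mpr ⟨d, hd, rfl⟩) ?_
    rw [inO_negD]
    exact hO
  · intro h d' hd' hO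
    obtain ⟨d, hd, rfl⟩ := Finset.mem_image.mp hd'
    rw [inO_negD] at hO
    exact h d hd hO

lemma GoodD_negD {D : Finset (Pt 2 × Pt 2)} (h : GoodD D) : GoodD (negD D) := by
  obtain ⟨h1, h2⟩ := h
  constructor
  · intro d' hd'
    obtain ⟨d, hd, rfl⟩ := Finset.mem_image.mp hd'
    intro i
    simp only [Pi.neg_apply]
    exact neg_le_neg ((h1 d hd) i)
  · intro a' ha' b' hb' hab z hza hzb
    obtain ⟨a, ha, rfl⟩ := Finset.mem_image.mp ha'
    obtain ⟨b, hb, rfl⟩ := Finset.mem_image.mp hb'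
    rw [inB_negD] at hza hzb
    have hab' : a ≠ b := by
      intro hc; subst hc; exact hab rfl
    exact h2 a ha b hb hab' _ hza hzb

noncomputable def bundle (D : Finset (Pt 2 × Pt 2)) (o : Pt 2) : List (Bool × ℝ) :=
  construct D.card D o

lemma bundle_spec {D : Finset (Pt 2 × Pt 2)} {o : Pt 2} (hGood : GoodD D) (ho : o ∈ FD D) :
    okL (bundle D o) ∧ ∀ v, walk (bundle D o) o v ∈ FD D :=
  construct_spec D.card D D o hGood (Finset.Subset.refl _) le_rfl ho
    (fun d hd hdD => absurd hd hdD)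

noncomputable def Psi (D : Finset (Pt 2 × Pt 2)) (o : Pt 2) (v : ℝ) : Pt 2 :=
  if vv o ≤ v then walk (bundle D o) o v
  else - walk (bundle (negD D) (-o)) (-o) (-v)

section PsiFacts

variable {D : Finset (Pt 2 × Pt 2)} {o : Pt 2} (hGood : GoodD D) (ho : o ∈ FD D)

lemma ho2' (ho : o ∈ FD D) : -o ∈ FD (negD D) := by
  rw [FD_negD, neg_neg]; exact ho

include hGood ho

lemma Psi_o : Psi D o (vv o) = o := by
  unfold Psi
  rw [if_pos le_rfl, walk_start _ _ _ (bundle_spec hGood ho).1 le_rfl]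

lemma Psi_free : ∀ v, Psi D o v ∈ FD D := by
  intro v
  unfold Psi
  by_cases h : vv o ≤ v
  · rw [if_pos h]; exact (bundle_spec hGood ho).2 v
  · rw [if_neg h]
    exact FD_negD.mp ((bundle_spec (GoodD_negD hGood) (ho2' ho)).2 (-v))

lemma Psi_vv : ∀ v, vv (Psi D o v) = v := by
  intro v
  unfold Psi
  by_cases h : vv o ≤ v
  · rw [if_pos h, walk_vv _ _ _ (bundle_spec hGood ho).1, max_eq_left h]
  · rw [if_neg h, vv_neg, walk_vv _ _ _ (bundle_spec (GoodD_negD hGood) (ho2' ho)).1,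
      vv_neg]
    push_neg at h
    rw [max_eq_left (by linarith)]
    ring

lemma Psi_cont : Continuous (Psi D o) := by
  unfold Psi
  refine Continuous.if_le ?_ ?_ continuous_const continuous_id ?_
  · exact walk_cont _ _ (bundle_spec hGood ho).1
  · exact ((walk_cont _ _ (bundle_spec (GoodD_negD hGood) (ho2' ho)).1).comp continuous_neg).neg
  · intro v hv
    subst hv
    rw [walk_start _ _ _ (bundle_spec hGood ho).1 le_rfl,
      walk_start _ _ _ (bundle_spec (GoodD_negD hGood) (ho2' ho)).1 (by rw [vv_neg]),
      neg_neg]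

lemma Psi_x_anti : ∀ {v v' : ℝ}, v ≤ v' → Psi D o v' 0 ≤ Psi D o v 0 := by
  have ok1 := (bundle_spec hGood ho).1
  have ok2 := (bundle_spec (GoodD_negD hGood) (ho2' ho)).1
  intro v v' hvv
  unfold Psi
  by_cases h : vv o ≤ v
  · rw [if_pos h, if_pos (le_trans h hvv)]
    exact walk_x_anti _ _ _ _ ok1 hvv
  · rw [if_neg h]
    by_cases h' : vv o ≤ v'
    · rw [if_pos h']
      have e1 : walk (bundle D o) o v' 0 ≤ o 0 := by
        have := walk_x_anti (bundle D o) o (vv o) v' ok1 h'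
        rwa [walk_start _ _ _ ok1 le_rfl] at this
      have e2 : walk (bundle (negD D) (-o)) (-o) (-v) 0 ≤ (-o) 0 := walk_x_le _ _ _ ok2
      simp only [Pi.neg_apply] at e2 ⊢
      linarith
    · rw [if_neg h']
      have := walk_x_anti (bundle (negD D) (-o)) (-o) (-v') (-v) ok2 (by linarith)
      simp only [Pi.neg_apply]
      linarith

lemma Psi_y_mono : ∀ {v v' : ℝ}, v ≤ v' → Psi D o v 1 ≤ Psi D o v' 1 := by
  have ok1 := (bundle_spec hGood ho).1
  have ok2 := (bundle_spec (GoodD_negD hGood) (ho2' ho)).1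
  intro v v' hvv
  unfold Psi
  by_cases h : vv o ≤ v
  · rw [if_pos h, if_pos (le_trans h hvv)]
    exact walk_y_mono _ _ _ _ ok1 hvv
  · rw [if_neg h]
    by_cases h' : vv o ≤ v'
    · rw [if_pos h']
      have e1 : o 1 ≤ walk (bundle D o) o v' 1 := by
        have := walk_y_mono (bundle D o) o (vv o) v' ok1 h'
        rwa [walk_start _ _ _ ok1 le_rfl] at this
      have e2 : (-o) 1 ≤ walk (bundle (negD D) (-o)) (-o) (-v) 1 := walk_y_ge _ _ _ ok2
      simp only [Pi.neg_apply] at e2 ⊢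
      linarith
    · rw [if_neg h']
      have := walk_y_mono (bundle (negD D) (-o)) (-o) (-v') (-v) ok2 (by linarith)
      simp only [Pi.neg_apply]
      linarith

lemma Psi_u_lip : ∀ {v v' : ℝ}, v ≤ v' → |uu (Psi D o v') - uu (Psi D o v)| ≤ v' - v := by
  intro v v' hvv
  have hx := Psi_x_anti hGood ho hvv
  have hy := Psi_y_mono hGood ho hvv
  have h1 := Psi_vv hGood ho v
  have h2 := Psi_vv hGood ho v'
  unfold vv at h1 h2
  unfold uu
  rw [abs_le]
  constructor <;> nlinarith [hx, hy]

end PsiFacts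



lemma nrm1_sub_comm (x y : Pt 2) : nrm1 (x - y) = nrm1 (y - x) := by
  rw [nrm1_two, nrm1_two]
  simp only [Pi.sub_apply]
  rw [abs_sub_comm, abs_sub_comm (x 1)]

lemma nrm1_tri (x y z : Pt 2) : nrm1 (x - z) ≤ nrm1 (x - y) + nrm1 (y - z) := by
  rw [nrm1_two, nrm1_two, nrm1_two]
  simp only [Pi.sub_apply]
  have h0 := abs_sub_le (x 0) (y 0) (z 0)
  have h1 := abs_sub_le (x 1) (y 1) (z 1)
  linarith

section PsiFacts2

variable {D : Finset (Pt 2 × Pt 2)} {o : Pt 2} (hGood : GoodD D) (ho : o ∈ FD D)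

include hGood ho

lemma psi_var (a b : ℝ) :
    eVariationOn (κ ∘ fun t : ℝ => Psi D o (a + t * (b - a))) (Set.Icc 0 1)
      ≤ ENNReal.ofReal (nrm1 (Psi D o b - Psi D o a)) := by
  refine iSup_le fun P => ?_
  obtain ⟨n, ⟨u, hu, hus⟩⟩ := P
  dsimp only
  set g : ℝ → ℝ := fun t => a + t * (b - a) with hg
  set X : ℕ → ℝ := fun i => Psi D o (g (u i)) 0 with hX
  set Y : ℕ → ℝ := fun i => Psi D o (g (u i)) 1 with hY
  have hbounds : ∀ i, min a b ≤ g (u i) ∧ g (u i) ≤ max a b := by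
    intro i
    obtain ⟨h0, h1⟩ := hus i
    have hgi : g (u i) = a + u i * (b - a) := rfl
    rcases le_total a b with hab | hab
    · rw [min_eq_left hab, max_eq_right hab]
      constructor <;> nlinarith [hgi]
    · rw [min_eq_right hab, max_eq_left hab]
      constructor <;> nlinarith [hgi]
  have hterm : ∀ i, edist (κ (Psi D o (g (u (i+1))))) (κ (Psi D o (g (u i))))
      = ENNReal.ofReal (nrm1 (Psi D o (g (u (i+1))) - Psi D o (g (u i)))) := by
    intro i; exact edist_κ _ _
  rcases le_total a b with hab | hab
  · have hgu : ∀ i j : ℕ, i ≤ j → g (u i) ≤ g (u j) := by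
      intro i j hij
      have := hu hij
      simp only [hg]
      nlinarith
    have hterm2 : ∀ i, nrm1 (Psi D o (g (u (i+1))) - Psi D o (g (u i)))
        = (X i - X (i+1)) + (Y (i+1) - Y i) := by
      intro i
      rw [nrm1_two]
      simp only [Pi.sub_apply]
      have hx : Psi D o (g (u (i+1))) 0 ≤ Psi D o (g (u i)) 0 :=
        Psi_x_anti hGood ho (hgu i (i+1) (Nat.le_succ i))
      have hy : Psi D o (g (u i)) 1 ≤ Psi D o (g (u (i+1))) 1 :=
        Psi_y_mono hGood ho (hgu i (i+1) (Nat.le_succ i))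
      rw [abs_of_nonpos (by simpa [hX] using sub_nonpos.mpr hx),
        abs_of_nonneg (by simpa [hY] using sub_nonneg.mpr hy)]
      simp only [hX, hY]
      ring
    calc (∑ i ∈ Finset.range n, edist (κ (Psi D o (g (u (i+1))))) (κ (Psi D o (g (u i)))))
        = ∑ i ∈ Finset.range n, ENNReal.ofReal ((X i - X (i+1)) + (Y (i+1) - Y i)) := by
          refine Finset.sum_congr rfl fun i _ => ?_
          rw [hterm i, hterm2 i]
      _ = ENNReal.ofReal (∑ i ∈ Finset.range n, ((X i - X (i+1)) + (Y (i+1) - Y i))) := by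
          rw [ENNReal.ofReal_sum_of_nonneg]
          intro i _
          have hx : X (i+1) ≤ X i := Psi_x_anti hGood ho (hgu i (i+1) (Nat.le_succ i))
          have hy : Y i ≤ Y (i+1) := Psi_y_mono hGood ho (hgu i (i+1) (Nat.le_succ i))
          linarith
      _ ≤ ENNReal.ofReal (nrm1 (Psi D o b - Psi D o a)) := by
          apply ENNReal.ofReal_le_ofReal
          rw [Finset.sum_add_distrib, Finset.sum_range_sub' X, Finset.sum_range_sub Y]
          rw [nrm1_two]
          simp only [Pi.sub_apply]
          have h1 : X 0 ≤ Psi D o a 0 := by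
            have : a ≤ g (u 0) := by rw [← min_eq_left hab]; exact (hbounds 0).1
            exact Psi_x_anti hGood ho this
          have h2 : Psi D o b 0 ≤ X n := by
            have : g (u n) ≤ b := by rw [← max_eq_right hab]; exact (hbounds n).2
            exact Psi_x_anti hGood ho this
          have h3 : Psi D o a 1 ≤ Y 0 := by
            have : a ≤ g (u 0) := by rw [← min_eq_left hab]; exact (hbounds 0).1
            exact Psi_y_mono hGood ho this
          have h4 : Y n ≤ Psi D o b 1 := by
            have : g (u n) ≤ b := by rw [← max_eq_right hab]; exact (hbounds n).2
            exact Psi_y_mono hGood ho this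
          have h5 : Psi D o b 0 ≤ Psi D o a 0 := Psi_x_anti hGood ho hab
          have h6 : Psi D o a 1 ≤ Psi D o b 1 := Psi_y_mono hGood ho hab
          rw [abs_of_nonpos (by linarith), abs_of_nonneg (by linarith)]
          linarith
  · have hgu : ∀ i j : ℕ, i ≤ j → g (u j) ≤ g (u i) := by
      intro i j hij
      have := hu hij
      simp only [hg]
      nlinarith
    have hterm2 : ∀ i, nrm1 (Psi D o (g (u (i+1))) - Psi D o (g (u i)))
        = (X (i+1) - X i) + (Y i - Y (i+1)) := by
      intro i
      rw [nrm1_two]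
      simp only [Pi.sub_apply]
      have hx : Psi D o (g (u i)) 0 ≤ Psi D o (g (u (i+1))) 0 :=
        Psi_x_anti hGood ho (hgu i (i+1) (Nat.le_succ i))
      have hy : Psi D o (g (u (i+1))) 1 ≤ Psi D o (g (u i)) 1 :=
        Psi_y_mono hGood ho (hgu i (i+1) (Nat.le_succ i))
      rw [abs_of_nonneg (by simpa [hX] using sub_nonneg.mpr hx),
        abs_of_nonpos (by simpa [hY] using sub_nonpos.mpr hy)]
      simp only [hX, hY]
      ring
    calc (∑ i ∈ Finset.range n, edist (κ (Psi D o (g (u (i+1))))) (κ (Psi D o (g (u i)))))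
        = ∑ i ∈ Finset.range n, ENNReal.ofReal ((X (i+1) - X i) + (Y i - Y (i+1))) := by
          refine Finset.sum_congr rfl fun i _ => ?_
          rw [hterm i, hterm2 i]
      _ = ENNReal.ofReal (∑ i ∈ Finset.range n, ((X (i+1) - X i) + (Y i - Y (i+1)))) := by
          rw [ENNReal.ofReal_sum_of_nonneg]
          intro i _
          have hx : X i ≤ X (i+1) := Psi_x_anti hGood ho (hgu i (i+1) (Nat.le_succ i))
          have hy : Y (i+1) ≤ Y i := Psi_y_mono hGood ho (hgu i (i+1) (Nat.le_succ i))
          linarith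
      _ ≤ ENNReal.ofReal (nrm1 (Psi D o b - Psi D o a)) := by
          apply ENNReal.ofReal_le_ofReal
          rw [Finset.sum_add_distrib, Finset.sum_range_sub X, Finset.sum_range_sub' Y]
          rw [nrm1_two]
          simp only [Pi.sub_apply]
          have h1 : Psi D o a 0 ≤ X 0 := by
            have : g (u 0) ≤ a := by rw [← max_eq_left hab]; exact (hbounds 0).2
            exact Psi_x_anti hGood ho this
          have h2 : X n ≤ Psi D o b 0 := by
            have : b ≤ g (u n) := by rw [← min_eq_right hab]; exact (hbounds n).1
            exact Psi_x_anti hGood ho this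
          have h3 : Y 0 ≤ Psi D o a 1 := by
            have : g (u 0) ≤ a := by rw [← max_eq_left hab]; exact (hbounds 0).2
            exact Psi_y_mono hGood ho this
          have h4 : Psi D o b 1 ≤ Y n := by
            have : b ≤ g (u n) := by rw [← min_eq_right hab]; exact (hbounds n).1
            exact Psi_y_mono hGood ho this
          have h5 : Psi D o a 0 ≤ Psi D o b 0 := Psi_x_anti hGood ho hab
          have h6 : Psi D o b 1 ≤ Psi D o a 1 := Psi_y_mono hGood ho hab
          rw [abs_of_nonneg (by linarith), abs_of_nonpos (by linarith)]
          linarith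

lemma sign_le {p : Pt 2} (hp : p ≤ o) : uu p - uu (Psi D o (vv p)) ≤ 0 := by
  have h0 : p 0 ≤ o 0 := hp 0
  have h1 : p 1 ≤ o 1 := hp 1
  have hlip : uu o - uu (Psi D o (vv p)) ≤ |vv p - vv o| := by
    rcases le_total (vv p) (vv o) with h | h
    · have := Psi_u_lip hGood ho h
      rw [Psi_o hGood ho] at this
      have h2 := (abs_le.mp this).2
      rw [abs_of_nonpos (by linarith)]
      linarith
    · have := Psi_u_lip hGood ho h
      rw [Psi_o hGood ho] at this
      have h2 := (abs_le.mp this).1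
      rw [abs_of_nonneg (by linarith)]
      linarith
  have hexp : uu p - uu (Psi D o (vv p)) = (uu p - uu o) + (uu o - uu (Psi D o (vv p))) := by ring
  rw [hexp]
  rcases abs_cases (vv p - vv o) with ⟨he, _⟩ | ⟨he, _⟩ <;>
    (rw [he] at hlip; unfold uu vv at *; linarith)

lemma sign_ge {q : Pt 2} (hq : o ≤ q) : 0 ≤ uu q - uu (Psi D o (vv q)) := by
  have h0 : o 0 ≤ q 0 := hq 0
  have h1 : o 1 ≤ q 1 := hq 1
  have hlip : uu (Psi D o (vv q)) - uu o ≤ |vv q - vv o| := by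
    rcases le_total (vv q) (vv o) with h | h
    · have := Psi_u_lip hGood ho h
      rw [Psi_o hGood ho] at this
      have h2 := (abs_le.mp this).1
      rw [abs_of_nonpos (by linarith)]
      linarith
    · have := Psi_u_lip hGood ho h
      rw [Psi_o hGood ho] at this
      have h2 := (abs_le.mp this).2
      rw [abs_of_nonneg (by linarith)]
      linarith
  rcases abs_cases (vv q - vv o) with ⟨he, _⟩ | ⟨he, _⟩ <;>
    (rw [he] at hlip; unfold uu vv at *; linarith)

end PsiFacts2



lemma nrm1_nonneg (x : Pt 2) : 0 ≤ nrm1 x := by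
  rw [nrm1_two]; positivity

lemma eVar_split (g : ℝ → PiLp 1 (fun _ : Fin 2 => ℝ)) {a b c : ℝ} (hab : a ≤ b) (hbc : b ≤ c) :
    eVariationOn g (Set.Icc a b) + eVariationOn g (Set.Icc b c) = eVariationOn g (Set.Icc a c) := by
  have := eVariationOn.Icc_add_Icc g (s := Set.univ) hab hbc (Set.mem_univ b)
  simpa [Set.univ_inter] using this

lemma geo_le_path {F : Set (Pt 2)} {p q : Pt 2} {γ : ℝ → Pt 2} (h : IsPathIn F p q γ) :
    geo nrm1 F p q ≤ pathLen nrm1 γ :=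
  iInf_le_of_le γ (iInf_le _ h)

lemma keyD (D : Finset (Pt 2 × Pt 2)) (hGood : GoodD D) (p q o : Pt 2)
    (hp : p ∈ FD D) (hq : q ∈ FD D) (ho : o ∈ FD D)
    (horder : (p ≤ o ∧ o ≤ q) ∨ (q ≤ o ∧ o ≤ p)) :
    geo nrm1 (FD D) p o + geo nrm1 (FD D) o q ≤ 3 * geo nrm1 (FD D) p q := by
  have hPsiC := Psi_cont hGood ho
  have huuC : Continuous fun z : Pt 2 => uu z := by
    unfold uu; exact (continuous_apply 0).add (continuous_apply 1)
  have hvvC : Continuous fun z : Pt 2 => vv z := by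
    unfold vv; exact (continuous_apply 1).sub (continuous_apply 0)
  have H : ∀ γ : ℝ → Pt 2, IsPathIn (FD D) p q γ →
      geo nrm1 (FD D) p o + geo nrm1 (FD D) o q ≤ 3 * pathLen nrm1 γ := by
    intro γ hγ
    obtain ⟨hγc, hγP, hγQ, hγF⟩ := hγ
    set sgn : Pt 2 → ℝ := fun z => uu z - uu (Psi D o (vv z)) with hsgn
    have hgc : Continuous sgn :=
      huuC.sub (huuC.comp (hPsiC.comp hvvC))
    have hIVT : ∃ s ∈ Set.Icc (0:ℝ) 1, sgn (γ s) = 0 := by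
      have hcont : ContinuousOn (fun t => sgn (γ t)) (Set.uIcc (0:ℝ) 1) := by
        rw [Set.uIcc_of_le (by norm_num : (0:ℝ) ≤ 1)]
        exact hgc.comp_continuousOn hγc
      have hmem : (0:ℝ) ∈ Set.uIcc (sgn (γ 0)) (sgn (γ 1)) := by
        rw [hγP, hγQ, Set.mem_uIcc]
        rcases horder with ⟨h1, h2⟩ | ⟨h1, h2⟩
        · exact Or.inl ⟨sign_le hGood ho h1, sign_ge hGood ho h2⟩
        · exact Or.inr ⟨sign_le hGood ho h1, sign_ge hGood ho h2⟩
      obtain ⟨s, hs, hfs⟩ := intermediate_value_uIcc hcont hmem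
      exact ⟨s, by rwa [Set.uIcc_of_le (by norm_num : (0:ℝ) ≤ 1)] at hs, hfs⟩
    obtain ⟨s, hs01, hzero⟩ := hIVT
    obtain ⟨hs0, hs1⟩ := hs01
    set z := γ s with hzdef
    have hz : Psi D o (vv z) = z := by
      apply pt_eq_of_uv
      · exact (sub_eq_zero.mp hzero).symm
      · exact Psi_vv hGood ho (vv z)
    have hPo : Psi D o (vv o) = o := Psi_o hGood ho
    -- clamp
    set clamp : ℝ → ℝ := fun t => max 0 (min t 1) with hclamp
    have hc0 : ∀ t, 0 ≤ clamp t := fun t => le_max_left 0 _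
    have hc1 : ∀ t, clamp t ≤ 1 := fun t => max_le zero_le_one (min_le_right _ _)
    have hcmono : Monotone clamp := fun a b h =>
      max_le_max le_rfl (min_le_min h le_rfl)
    have hccont : Continuous clamp := continuous_const.max (continuous_id.min continuous_const)
    have hclamp0 : clamp 0 = 0 := by simp [hclamp]
    have hclamp1 : clamp 1 = 1 := by norm_num [hclamp]
    -- the four path pieces
    set γ1 : ℝ → Pt 2 := fun τ => γ (clamp τ * s) with hγ1
    set γ2 : ℝ → Pt 2 := fun τ => γ (s + clamp τ * (1 - s)) with hγ2
    set α1 : ℝ → Pt 2 := fun τ => Psi D o (vv z + τ * (vv o - vv z)) with hα1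
    set α2 : ℝ → Pt 2 := fun τ => Psi D o (vv o + τ * (vv z - vv o)) with hα2
    have hγ1arg : ∀ τ, clamp τ * s ∈ Set.Icc 0 s :=
      fun τ => ⟨mul_nonneg (hc0 τ) hs0, by nlinarith [hc1 τ, hc0 τ]⟩
    have hγ2arg : ∀ τ, s + clamp τ * (1 - s) ∈ Set.Icc s 1 :=
      fun τ => ⟨by nlinarith [hc0 τ], by nlinarith [hc1 τ, hc0 τ]⟩
    have hsub1 : Set.Icc (0:ℝ) s ⊆ Set.Icc 0 1 := Set.Icc_subset_Icc le_rfl hs1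
    have hsub2 : Set.Icc s 1 ⊆ Set.Icc (0:ℝ) 1 := Set.Icc_subset_Icc hs0 le_rfl
    have hγ1c : Continuous γ1 :=
      hγc.comp_continuous (hccont.mul continuous_const) (fun τ => hsub1 (hγ1arg τ))
    have hγ2c : Continuous γ2 :=
      hγc.comp_continuous (continuous_const.add (hccont.mul continuous_const))
        (fun τ => hsub2 (hγ2arg τ))
    have hα1c : Continuous α1 :=
      hPsiC.comp (continuous_const.add (continuous_id.mul continuous_const))
    have hα2c : Continuous α2 :=
      hPsiC.comp (continuous_const.add (continuous_id.mul continuous_const))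
    have hγ1_1 : γ1 1 = z := by simp [hγ1, hclamp1, hzdef]
    have hγ1_0 : γ1 0 = p := by simp [hγ1, hclamp0, hγP]
    have hγ2_0 : γ2 0 = z := by simp [hγ2, hclamp0, hzdef]
    have hγ2_1 : γ2 1 = q := by
      simp only [hγ2, hclamp1]
      rw [show s + 1 * (1 - s) = 1 by ring, hγQ]
    have hα1_0 : α1 0 = z := by
      simp only [hα1]
      rw [show vv z + 0 * (vv o - vv z) = vv z by ring, hz]
    have hα1_1 : α1 1 = o := by
      simp only [hα1]
      rw [show vv z + 1 * (vv o - vv z) = vv o by ring, hPo]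
    have hα2_0 : α2 0 = o := by
      simp only [hα2]
      rw [show vv o + 0 * (vv z - vv o) = vv o by ring, hPo]
    have hα2_1 : α2 1 = z := by
      simp only [hα2]
      rw [show vv o + 1 * (vv z - vv o) = vv z by ring, hz]
    -- the two concatenated paths
    set η1 : ℝ → Pt 2 := fun t => if t ≤ (1:ℝ)/2 then γ1 (2*t) else α1 (2*t - 1) with hη1
    set η2 : ℝ → Pt 2 := fun t => if t ≤ (1:ℝ)/2 then α2 (2*t) else γ2 (2*t - 1) with hη2
    have hη1c : Continuous η1 := by
      refine Continuous.if_le (hγ1c.comp (by fun_prop)) (hα1c.comp (by fun_prop))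
        continuous_id continuous_const ?_
      intro t ht
      rw [ht]
      norm_num [hγ1_1, hα1_0]
    have hη2c : Continuous η2 := by
      refine Continuous.if_le (hα2c.comp (by fun_prop)) (hγ2c.comp (by fun_prop))
        continuous_id continuous_const ?_
      intro t ht
      rw [ht]
      norm_num [hα2_1, hγ2_0]
    have hη1path : IsPathIn (FD D) p o η1 := by
      refine ⟨hη1c.continuousOn, ?_, ?_, ?_⟩
      · show (if (0:ℝ) ≤ 1/2 then γ1 (2*0) else _) = p
        rw [if_pos (by norm_num)]
        rw [show (2:ℝ)*0 = 0 by ring, hγ1_0]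
      · show (if (1:ℝ) ≤ 1/2 then _ else α1 (2*1 - 1)) = o
        rw [if_neg (by norm_num)]
        rw [show (2:ℝ)*1 - 1 = 1 by ring, hα1_1]
      · intro t _
        show (if t ≤ (1:ℝ)/2 then γ1 (2*t) else α1 (2*t - 1)) ∈ FD D
        split_ifs
        · exact hγF _ (hsub1 (hγ1arg _))
        · exact Psi_free hGood ho _
    have hη2path : IsPathIn (FD D) o q η2 := by
      refine ⟨hη2c.continuousOn, ?_, ?_, ?_⟩
      · show (if (0:ℝ) ≤ 1/2 then α2 (2*0) else _) = o
        rw [if_pos (by norm_num)]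
        rw [show (2:ℝ)*0 = 0 by ring, hα2_0]
      · show (if (1:ℝ) ≤ 1/2 then _ else γ2 (2*1 - 1)) = q
        rw [if_neg (by norm_num)]
        rw [show (2:ℝ)*1 - 1 = 1 by ring, hγ2_1]
      · intro t _
        show (if t ≤ (1:ℝ)/2 then α2 (2*t) else γ2 (2*t - 1)) ∈ FD D
        split_ifs
        · exact Psi_free hGood ho _
        · exact hγF _ (hsub2 (hγ2arg _))
    -- length bounds
    have half01 : (0:ℝ) ≤ 1/2 ∧ (1:ℝ)/2 ≤ 1 := by norm_num
    have hL1 : pathLen nrm1 η1 ≤ eVariationOn (κ ∘ γ) (Set.Icc 0 s)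
        + ENNReal.ofReal (nrm1 (o - z)) := by
      rw [pathLen_eq, ← eVar_split (κ ∘ η1) half01.1 half01.2]
      refine add_le_add ?_ ?_
      · have heq : Set.EqOn (κ ∘ η1) ((κ ∘ γ) ∘ (fun t => clamp (2*t) * s))
            (Set.Icc 0 (1/2)) := by
          intro t ht
          simp only [Function.comp_apply, hη1]
          rw [if_pos ht.2]
        rw [eVariationOn.eq_of_eqOn heq]
        refine eVariationOn.comp_le_of_monotoneOn _ _ ?_ ?_
        · intro x hx y hy hxy
          exact mul_le_mul_of_nonneg_right (hcmono (by linarith)) hs0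
        · intro x hx
          exact hγ1arg _
      · have heq : Set.EqOn (κ ∘ η1) ((κ ∘ α1) ∘ (fun t => 2*t - 1))
            (Set.Icc (1/2) 1) := by
          intro t ht
          simp only [Function.comp_apply, hη1]
          rcases lt_or_eq_of_le ht.1 with h | h
          · rw [if_neg (by linarith)]
          · rw [if_pos (by linarith), ← h]
            norm_num [hγ1_1, hα1_0]
        rw [eVariationOn.eq_of_eqOn heq]
        refine le_trans (eVariationOn.comp_le_of_monotoneOn (s := Set.Icc (0:ℝ) 1) (κ ∘ α1) _ ?_ ?_) ?_
        · intro x hx y hy hxy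
          dsimp only
          linarith
        · intro x hx
          obtain ⟨h1, h2⟩ := hx
          dsimp only
          constructor <;> [linarith; linarith]
        · have := psi_var hGood ho (vv z) (vv o)
          rw [hz, hPo] at this
          exact le_trans (le_of_eq (by rfl)) this
    have hL2 : pathLen nrm1 η2 ≤ ENNReal.ofReal (nrm1 (z - o))
        + eVariationOn (κ ∘ γ) (Set.Icc s 1) := by
      rw [pathLen_eq, ← eVar_split (κ ∘ η2) half01.1 half01.2]
      refine add_le_add ?_ ?_
      · have heq : Set.EqOn (κ ∘ η2) ((κ ∘ α2) ∘ (fun t => 2*t))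
            (Set.Icc 0 (1/2)) := by
          intro t ht
          simp only [Function.comp_apply, hη2]
          rw [if_pos ht.2]
        rw [eVariationOn.eq_of_eqOn heq]
        refine le_trans (eVariationOn.comp_le_of_monotoneOn (s := Set.Icc (0:ℝ) 1) (κ ∘ α2) _ ?_ ?_) ?_
        · intro x hx y hy hxy
          dsimp only
          linarith
        · intro x hx
          obtain ⟨h1, h2⟩ := hx
          dsimp only
          constructor <;> [linarith; linarith]
        · have := psi_var hGood ho (vv o) (vv z)
          rw [hz, hPo] at this
          exact le_trans (le_of_eq (by rfl)) this
      · have heq : Set.EqOn (κ ∘ η2) ((κ ∘ γ) ∘ (fun t => s + clamp (2*t - 1) * (1 - s)))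
            (Set.Icc (1/2) 1) := by
          intro t ht
          simp only [Function.comp_apply, hη2]
          rcases lt_or_eq_of_le ht.1 with h | h
          · rw [if_neg (by linarith)]
          · rw [if_pos (by linarith), ← h]
            norm_num [hα2_1, hclamp0, hzdef]
        rw [eVariationOn.eq_of_eqOn heq]
        refine eVariationOn.comp_le_of_monotoneOn _ _ ?_ ?_
        · intro x hx y hy hxy
          have hcc : clamp (2*x - 1) ≤ clamp (2*y - 1) := hcmono (by linarith)
          dsimp only
          nlinarith [hc0 (2*x-1), hc0 (2*y-1)]
        · intro x hx
          exact hγ2arg _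
    -- endpoint lower bounds
    have hzp : ENNReal.ofReal (nrm1 (z - p)) ≤ eVariationOn (κ ∘ γ) (Set.Icc 0 s) := by
      have := eVariationOn.edist_le (κ ∘ γ) (x := s) (y := 0)
        (Set.mem_Icc.mpr ⟨hs0, le_rfl⟩) (Set.mem_Icc.mpr ⟨le_rfl, hs0⟩)
      rw [Function.comp_apply, Function.comp_apply, hγP, edist_κ] at this
      exact this
    have hzq : ENNReal.ofReal (nrm1 (z - q)) ≤ eVariationOn (κ ∘ γ) (Set.Icc s 1) := by
      have := eVariationOn.edist_le (κ ∘ γ) (x := s) (y := 1)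
        (Set.mem_Icc.mpr ⟨le_rfl, hs1⟩) (Set.mem_Icc.mpr ⟨hs1, le_rfl⟩)
      rw [Function.comp_apply, Function.comp_apply, hγQ, edist_κ] at this
      exact this
    have hpq : ENNReal.ofReal (nrm1 (p - q)) ≤ pathLen nrm1 γ := by
      rw [pathLen_eq]
      have := eVariationOn.edist_le (κ ∘ γ) (x := (0:ℝ)) (y := 1)
        (Set.mem_Icc.mpr ⟨le_rfl, zero_le_one⟩) (Set.mem_Icc.mpr ⟨zero_le_one, le_rfl⟩)
      rw [Function.comp_apply, Function.comp_apply, hγP, hγQ, edist_κ] at this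
      exact this
    -- the key norm inequality
    have hkey : nrm1 (z - o) + nrm1 (z - o) ≤ nrm1 (p - q) + (nrm1 (z - p) + nrm1 (z - q)) := by
      have t1 : nrm1 (z - o) ≤ nrm1 (z - p) + nrm1 (p - o) := nrm1_tri z p o
      have t2 : nrm1 (z - o) ≤ nrm1 (z - q) + nrm1 (q - o) := nrm1_tri z q o
      have t3 : nrm1 (p - o) + nrm1 (q - o) = nrm1 (p - q) := by
        rw [nrm1_two, nrm1_two, nrm1_two]
        simp only [Pi.sub_apply]
        rcases horder with ⟨h1, h2⟩ | ⟨h1, h2⟩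
        · rw [abs_of_nonpos (by have := h1 0; linarith),
            abs_of_nonpos (by have := h1 1; linarith),
            abs_of_nonneg (by have := h2 0; linarith),
            abs_of_nonneg (by have := h2 1; linarith),
            abs_of_nonpos (by have := h1 0; have := h2 0; linarith),
            abs_of_nonpos (by have := h1 1; have := h2 1; linarith)]
          ring
        · rw [abs_of_nonneg (by have := h2 0; linarith),
            abs_of_nonneg (by have := h2 1; linarith),
            abs_of_nonpos (by have := h1 0; linarith),
            abs_of_nonpos (by have := h1 1; linarith),
            abs_of_nonneg (by have := h1 0; have := h2 0; linarith),
            abs_of_nonneg (by have := h1 1; have := h2 1; linarith)]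
          ring
      linarith
    -- assembly
    have hVV : eVariationOn (κ ∘ γ) (Set.Icc 0 s) + eVariationOn (κ ∘ γ) (Set.Icc s 1)
        = pathLen nrm1 γ := by
      rw [pathLen_eq]
      exact eVar_split (κ ∘ γ) hs0 hs1
    calc geo nrm1 (FD D) p o + geo nrm1 (FD D) o q
        ≤ pathLen nrm1 η1 + pathLen nrm1 η2 :=
          add_le_add (geo_le_path hη1path) (geo_le_path hη2path)
      _ ≤ (eVariationOn (κ ∘ γ) (Set.Icc 0 s) + ENNReal.ofReal (nrm1 (o - z)))
          + (ENNReal.ofReal (nrm1 (z - o)) + eVariationOn (κ ∘ γ) (Set.Icc s 1)) :=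
          add_le_add hL1 hL2
      _ = (eVariationOn (κ ∘ γ) (Set.Icc 0 s) + eVariationOn (κ ∘ γ) (Set.Icc s 1))
          + (ENNReal.ofReal (nrm1 (z - o)) + ENNReal.ofReal (nrm1 (z - o))) := by
          rw [nrm1_sub_comm o z]; ring
      _ ≤ pathLen nrm1 γ + (ENNReal.ofReal (nrm1 (p - q))
          + (ENNReal.ofReal (nrm1 (z - p)) + ENNReal.ofReal (nrm1 (z - q)))) := by
          refine add_le_add (le_of_eq hVV) ?_
          rw [← ENNReal.ofReal_add (nrm1_nonneg _) (nrm1_nonneg _),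
            ← ENNReal.ofReal_add (nrm1_nonneg _) (nrm1_nonneg _),
            ← ENNReal.ofReal_add (nrm1_nonneg _) (add_nonneg (nrm1_nonneg _) (nrm1_nonneg _))]
          exact ENNReal.ofReal_le_ofReal hkey
      _ ≤ pathLen nrm1 γ + (pathLen nrm1 γ
          + (eVariationOn (κ ∘ γ) (Set.Icc 0 s) + eVariationOn (κ ∘ γ) (Set.Icc s 1))) := by
          refine add_le_add le_rfl (add_le_add hpq (add_le_add hzp hzq))
      _ = 3 * pathLen nrm1 γ := by
          rw [hVV]; ring
  -- conclude from infimum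
  by_cases htop : geo nrm1 (FD D) p q = ⊤
  · rw [htop]
    rw [ENNReal.mul_top (by norm_num : (3:ℝ≥0∞) ≠ 0)]
    exact le_top
  · refine ENNReal.le_of_forall_pos_le_add fun ε hε _ => ?_
    have hlt : geo nrm1 (FD D) p q < geo nrm1 (FD D) p q + (ε : ℝ≥0∞) / 3 := by
      refine ENNReal.lt_add_right htop ?_
      simp only [ne_eq, ENNReal.div_eq_zero_iff]
      push_neg
      exact ⟨by exact_mod_cast hε.ne', by norm_num⟩
    rw [geo] at hlt
    rw [iInf_lt_iff] at hlt
    obtain ⟨γ, hγlt⟩ := hlt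
    rw [iInf_lt_iff] at hγlt
    obtain ⟨hγpath, hγlen⟩ := hγlt
    refine le_trans (H γ hγpath) ?_
    have h3 : (3:ℝ≥0∞) * pathLen nrm1 γ ≤ 3 * (geo nrm1 (FD D) p q + (ε:ℝ≥0∞)/3) :=
      mul_le_mul_right hγlen.le 3
    refine le_trans h3 ?_
    rw [mul_add, ENNReal.mul_div_cancel' (by norm_num) (by norm_num)]



lemma pt_eta (z : Pt 2) : ![z 0, z 1] = z := by
  funext i; fin_cases i <;> simp

lemma inB_iff_mem {a b : Pt 2} {z : Pt 2} : inB (a, b) z ↔ z ∈ Set.Icc a b := by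
  simp only [inB, Set.mem_Icc, Pi.le_def, Fin.forall_fin_two]
  tauto

lemma inO_iff_interior {a b : Pt 2} {z : Pt 2} : z ∈ interior (Set.Icc a b) ↔ inO (a, b) z := by
  rw [← Set.pi_univ_Icc, interior_pi_set Set.finite_univ]
  simp only [Set.mem_pi, Set.mem_univ, forall_true_left, interior_Icc, Set.mem_Ioo,
    Fin.forall_fin_two, inO]
  tauto

open Classical in
noncomputable def boxCorners (B : Set (Pt 2)) : Pt 2 × Pt 2 :=
  if h : IsBox B then (h.choose, h.choose_spec.choose) else default

open Classical in
lemma boxCorners_spec {B : Set (Pt 2)} (h : IsBox B) :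
    (boxCorners B).1 ≤ (boxCorners B).2 ∧ B = Set.Icc (boxCorners B).1 (boxCorners B).2 := by
  rw [boxCorners, dif_pos h]
  exact h.choose_spec.choose_spec

noncomputable def obD (O : Finset (Set (Pt 2))) : Finset (Pt 2 × Pt 2) := O.image boxCorners

lemma obD_good {O : Finset (Set (Pt 2))} (hO : IsObstacleFamily O) : GoodD (obD O) := by
  constructor
  · intro d hd
    obtain ⟨B, hB, rfl⟩ := Finset.mem_image.mp hd
    exact (boxCorners_spec (hO.1 B hB)).1
  · intro d hd d' hd' hne z hz hz'
    obtain ⟨B, hB, rfl⟩ := Finset.mem_image.mp hd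
    obtain ⟨B', hB', rfl⟩ := Finset.mem_image.mp hd'
    have hBB : B ≠ B' := fun hc => hne (by rw [hc])
    have hdisj := hO.2 hB hB' hBB
    have h1 : z ∈ B := by
      rw [(boxCorners_spec (hO.1 B hB)).2]
      exact inB_iff_mem.mp hz
    have h2 : z ∈ B' := by
      rw [(boxCorners_spec (hO.1 B' hB')).2]
      exact inB_iff_mem.mp hz'
    exact Set.disjoint_left.mp hdisj h1 h2

lemma free_eq_FD {O : Finset (Set (Pt 2))} (hO : IsObstacleFamily O) : free O = FD (obD O) := by
  ext x
  constructor
  · intro hx d hd hOx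
    obtain ⟨B, hB, rfl⟩ := Finset.mem_image.mp hd
    refine hx B hB ?_
    rw [(boxCorners_spec (hO.1 B hB)).2]
    exact inO_iff_interior.mpr hOx
  · intro hx B hB hint
    refine hx (boxCorners B) (Finset.mem_image.mpr ⟨B, hB, rfl⟩) ?_
    rw [(boxCorners_spec (hO.1 B hB)).2] at hint
    exact inO_iff_interior.mp hint

-- flip machinery
def flipP (z : Pt 2) : Pt 2 := ![z 0, -(z 1)]

@[simp] lemma flipP_zero (z : Pt 2) : flipP z 0 = z 0 := by simp [flipP]
@[simp] lemma flipP_one (z : Pt 2) : flipP z 1 = -(z 1) := by simp [flipP]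

lemma flipP_invol (z : Pt 2) : flipP (flipP z) = z := by
  funext i; fin_cases i <;> simp [flipP]

lemma flipP_cont : Continuous flipP := by
  refine continuous_pi fun i => ?_
  fin_cases i
  · simpa [flipP] using continuous_apply (0 : Fin 2)
  · show Continuous fun a : Pt 2 => flipP a 1; simp only [flipP_one]; exact (continuous_apply 1).neg

lemma flip_nrm (x y : Pt 2) : nrm1 (flipP x - flipP y) = nrm1 (x - y) := by
  rw [nrm1_two, nrm1_two]
  simp only [Pi.sub_apply, flipP_zero, flipP_one]
  rw [show -x 1 - -y 1 = -(x 1 - y 1) by ring, abs_neg]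

noncomputable def flipD (D : Finset (Pt 2 × Pt 2)) : Finset (Pt 2 × Pt 2) :=
  D.image fun d => (![d.1 0, -(d.2 1)], ![d.2 0, -(d.1 1)])

lemma inO_flip (d : Pt 2 × Pt 2) (z : Pt 2) :
    inO (![d.1 0, -(d.2 1)], ![d.2 0, -(d.1 1)]) z ↔ inO d (flipP z) := by
  unfold inO
  simp only [Matrix.cons_val_zero, Matrix.cons_val_one, Matrix.head_cons, flipP_zero, flipP_one]
  constructor <;> (intro ⟨a, b, c, e⟩; exact ⟨by linarith, by linarith, by linarith, by linarith⟩)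

lemma inB_flip (d : Pt 2 × Pt 2) (z : Pt 2) :
    inB (![d.1 0, -(d.2 1)], ![d.2 0, -(d.1 1)]) z ↔ inB d (flipP z) := by
  unfold inB
  simp only [Matrix.cons_val_zero, Matrix.cons_val_one, Matrix.head_cons, flipP_zero, flipP_one]
  constructor <;> (intro ⟨a, b, c, e⟩; exact ⟨by linarith, by linarith, by linarith, by linarith⟩)

lemma FD_flip {D : Finset (Pt 2 × Pt 2)} {x : Pt 2} : x ∈ FD (flipD D) ↔ flipP x ∈ FD D := by
  constructor
  · intro h d hd hO
    refine h _ (Finset.mem_image.mpr ⟨d, hd, rfl⟩) ?_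
    rw [inO_flip]
    exact hO
  · intro h d' hd' hO
    obtain ⟨d, hd, rfl⟩ := Finset.mem_image.mp hd'
    rw [inO_flip] at hO
    exact h d hd hO

lemma GoodD_flip {D : Finset (Pt 2 × Pt 2)} (h : GoodD D) : GoodD (flipD D) := by
  constructor
  · intro d' hd'
    obtain ⟨d, hd, rfl⟩ := Finset.mem_image.mp hd'
    have := h.1 d hd
    intro i
    fin_cases i
    · simpa using this 0
    · simpa using neg_le_neg (this 1)
  · intro a' ha' b' hb' hab z hza hzb
    obtain ⟨a, ha, rfl⟩ := Finset.mem_image.mp ha'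
    obtain ⟨b, hb, rfl⟩ := Finset.mem_image.mp hb'
    rw [inB_flip] at hza hzb
    have hab' : a ≠ b := fun hc => hab (by rw [hc])
    exact h.2 a ha b hb hab' _ hza hzb

lemma pathLen_flip (γ : ℝ → Pt 2) : pathLen nrm1 (fun t => flipP (γ t)) = pathLen nrm1 γ := by
  unfold pathLen
  refine iSup_congr fun n => iSup_congr fun t => iSup_congr fun h => ?_
  refine Finset.sum_congr rfl fun i _ => ?_
  rw [flip_nrm]

lemma geo_flip_le (D : Finset (Pt 2 × Pt 2)) (a b : Pt 2) :
    geo nrm1 (FD (flipD D)) (flipP a) (flipP b) ≤ geo nrm1 (FD D) a b := by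
  refine le_iInf fun γ => le_iInf fun hγ => ?_
  obtain ⟨hc, h0, h1, hmem⟩ := hγ
  have : IsPathIn (FD (flipD D)) (flipP a) (flipP b) (fun t => flipP (γ t)) := by
    refine ⟨flipP_cont.comp_continuousOn hc, by show flipP (γ 0) = flipP a; rw [h0],
      by show flipP (γ 1) = flipP b; rw [h1], ?_⟩
    intro t ht
    show flipP (γ t) ∈ FD (flipD D)
    rw [FD_flip, flipP_invol]
    exact hmem t ht
  calc geo nrm1 (FD (flipD D)) (flipP a) (flipP b) ≤ pathLen nrm1 (fun t => flipP (γ t)) :=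
        geo_le_path this
    _ = pathLen nrm1 γ := pathLen_flip γ

lemma geo_flip_ge (D : Finset (Pt 2 × Pt 2)) (a b : Pt 2) :
    geo nrm1 (FD D) a b ≤ geo nrm1 (FD (flipD D)) (flipP a) (flipP b) := by
  refine le_iInf fun γ => le_iInf fun hγ => ?_
  obtain ⟨hc, h0, h1, hmem⟩ := hγ
  have : IsPathIn (FD D) a b (fun t => flipP (γ t)) := by
    refine ⟨flipP_cont.comp_continuousOn hc,
      by show flipP (γ 0) = a; rw [h0, flipP_invol],
      by show flipP (γ 1) = b; rw [h1, flipP_invol], ?_⟩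
    intro t ht
    show flipP (γ t) ∈ FD D
    exact FD_flip.mp (hmem t ht)
  calc geo nrm1 (FD D) a b ≤ pathLen nrm1 (fun t => flipP (γ t)) := geo_le_path this
    _ = pathLen nrm1 γ := pathLen_flip γ

lemma geo_flip_eq (D : Finset (Pt 2 × Pt 2)) (a b : Pt 2) :
    geo nrm1 (FD (flipD D)) (flipP a) (flipP b) = geo nrm1 (FD D) a b :=
  le_antisymm (geo_flip_le D a b) (geo_flip_ge D a b)

theorem statement_4' (O : Finset (Set (Pt 2))) (hO : IsObstacleFamily O)
    (p q o : Pt 2) (hp : p ∈ free O) (hq : q ∈ free O) (ho : o ∈ free O)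
    (hbox : o ∈ corners p q) :
    geo nrm1 (free O) p o + geo nrm1 (free O) o q ≤ 3 * geo nrm1 (free O) p q := by
  rw [free_eq_FD hO] at hp hq ho ⊢
  set D := obD O with hD
  have hGood : GoodD D := obD_good hO
  have hcoord : ∀ i, (p i ≤ o i ∧ o i ≤ q i) ∨ (q i ≤ o i ∧ o i ≤ p i) := by
    intro i
    have h1 : p ⊓ q ≤ o := hbox.1
    have h2 : o ≤ p ⊔ q := hbox.2
    have h1i : min (p i) (q i) ≤ o i := h1 i
    have h2i : o i ≤ max (p i) (q i) := h2 i
    rcases le_total (p i) (q i) with h | h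
    · left
      rw [min_eq_left h] at h1i
      rw [max_eq_right h] at h2i
      exact ⟨h1i, h2i⟩
    · right
      rw [min_eq_right h] at h1i
      rw [max_eq_left h] at h2i
      exact ⟨h1i, h2i⟩
  rcases hcoord 0 with h0 | h0 <;> rcases hcoord 1 with h1 | h1
  · refine keyD D hGood p q o hp hq ho (Or.inl ⟨?_, ?_⟩) <;>
      (intro i; fin_cases i)
    · exact h0.1
    · exact h1.1
    · exact h0.2
    · exact h1.2
  · -- p0 ≤ o0 ≤ q0, q1 ≤ o1 ≤ p1 : flip
    have := keyD (flipD D) (GoodD_flip hGood) (flipP p) (flipP q) (flipP o)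
      (FD_flip.mpr (by rwa [flipP_invol])) (FD_flip.mpr (by rwa [flipP_invol]))
      (FD_flip.mpr (by rwa [flipP_invol]))
      (Or.inl ⟨?_, ?_⟩)
    · rwa [geo_flip_eq, geo_flip_eq, geo_flip_eq] at this
    · intro i; fin_cases i
      · simpa using h0.1
      · simpa using neg_le_neg h1.2
    · intro i; fin_cases i
      · simpa using h0.2
      · simpa using neg_le_neg h1.1
  · -- q0 ≤ o0 ≤ p0, p1 ≤ o1 ≤ q1 : flip, right case
    have := keyD (flipD D) (GoodD_flip hGood) (flipP p) (flipP q) (flipP o)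
      (FD_flip.mpr (by rwa [flipP_invol])) (FD_flip.mpr (by rwa [flipP_invol]))
      (FD_flip.mpr (by rwa [flipP_invol]))
      (Or.inr ⟨?_, ?_⟩)
    · rwa [geo_flip_eq, geo_flip_eq, geo_flip_eq] at this
    · intro i; fin_cases i
      · simpa using h0.1
      · simpa using neg_le_neg h1.2
    · intro i; fin_cases i
      · simpa using h0.2
      · simpa using neg_le_neg h1.1
  · refine keyD D hGood p q o hp hq ho (Or.inr ⟨?_, ?_⟩) <;>
      (intro i; fin_cases i)
    · exact h0.1
    · exact h1.1
    · exact h0.2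
    · exact h1.2



/-- in ℝ² amid disjoint axis-parallel rectangle obstacles, for any
o ∈ B(p,q) outside all obstacle interiors, σ₁(p,o) + σ₁(o,q) ≤ 3·σ₁(p,q). -/
theorem statement_4 (O : Finset (Set (Pt 2))) (hO : IsObstacleFamily O)
    (p q o : Pt 2) (hp : p ∈ free O) (hq : q ∈ free O) (ho : o ∈ free O)
    (hbox : o ∈ corners p q) :
    geo nrm1 (free O) p o + geo nrm1 (free O) o q ≤ 3 * geo nrm1 (free O) p q :=
  statement_4' O hO p q o hp hq ho hbox

end GeoSpanner
end

section
/- For every ε with 0 < ε < 1 and every integer n ≥ 2, there exist a set P of n points in ℝ³ and a finite family 𝒪 of pairwise disjoint flat axis-parallel rectangles in ℝ³ (degenerate axis-parallel boxes) disjoint from P, such that for every set E of unordered pairs of points of P that does not contain all pairs, there exist distinct p, q ∈ P with {p,q} ∉ E and d_E(p,q) > (2 − ε)·σ(p,q). In other words, every non-complete graph on P has spanning ratio larger than 2 − ε with respect to the geodesic distance amid the obstacles. -/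
open scoped ENNReal

namespace GeoSpanner

/-- A flat axis-parallel rectangle in ℝ³: a product of three closed bounded
intervals, at least one of which is a single point. -/
def IsFlatBox (B : Set (Pt 3)) : Prop :=
  ∃ a b : Pt 3, a ≤ b ∧ (∃ i, a i = b i) ∧ B = Set.Icc a b

noncomputable def ptk (k : ℕ) : Pt 3 := ![0, 0, (k : ℝ)]

def plate (L : ℝ) (k : ℕ) : Set (Pt 3) :=
  Set.Icc ![-L, -L, (k : ℝ) + 1/2] ![L, L, (k : ℝ) + 1/2]

lemma mem_plate {L : ℝ} {k : ℕ} {y : Pt 3} :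
    y ∈ plate L k ↔ (-L ≤ y 0 ∧ y 0 ≤ L) ∧ (-L ≤ y 1 ∧ y 1 ≤ L) ∧ y 2 = (k : ℝ) + 1/2 := by
  simp only [plate, Set.mem_Icc, Pi.le_def]
  constructor
  · rintro ⟨h1, h2⟩
    refine ⟨⟨by simpa using h1 0, by simpa using h2 0⟩,
      ⟨by simpa using h1 1, by simpa using h2 1⟩,
      le_antisymm (by simpa using h2 2) (by simpa using h1 2)⟩
  · rintro ⟨⟨a0, b0⟩, ⟨a1, b1⟩, hz⟩
    constructor <;> intro c <;> fin_cases c <;> simp [a0, b0, a1, b1, hz]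

lemma nat_ne_half (a k : ℕ) : (a : ℝ) ≠ (k : ℝ) + 1/2 := by
  rcases le_or_gt a k with h | h
  · have : (a : ℝ) ≤ k := by exact_mod_cast h
    linarith
  · have : (k : ℝ) + 1 ≤ a := by exact_mod_cast h
    linarith

lemma tele {m : ℕ} (u : Fin (m + 1) → ℝ) :
    ∑ i : Fin m, (u i.succ - u i.castSucc) = u (Fin.last m) - u 0 := by
  induction m with
  | zero => simp
  | succ m ih =>
    rw [Fin.sum_univ_castSucc]
    have h1 : ∀ i : Fin m, u i.castSucc.succ - u i.castSucc.castSucc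
        = (u ∘ Fin.castSucc) i.succ - (u ∘ Fin.castSucc) i.castSucc := by
      intro i
      simp only [Function.comp_apply, Fin.succ_castSucc]
    calc (∑ i : Fin m, (u i.castSucc.succ - u i.castSucc.castSucc))
          + (u (Fin.last m).succ - u (Fin.last m).castSucc)
        = ((u ∘ Fin.castSucc) (Fin.last m) - (u ∘ Fin.castSucc) 0)
          + (u (Fin.last m).succ - u (Fin.last m).castSucc) := by
          rw [Finset.sum_congr rfl (fun i _ => h1 i), ih]
      _ = u (Fin.last (m + 1)) - u 0 := by
          simp only [Function.comp, Fin.succ_last]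
          rw [show (Fin.castSucc (0 : Fin (m+1))) = (0 : Fin (m+2)) from rfl]
          ring

lemma chain_eq {α : Type*} (x : ℕ → α) (a b : ℕ) (hab : a ≤ b)
    (h : ∀ j, a ≤ j → j < b → x j = x (j + 1)) : x a = x b := by
  induction b, hab using Nat.le_induction with
  | base => rfl
  | succ b hb ih =>
    exact (ih fun j hj hj' => h j hj (hj'.trans (Nat.lt_succ_self b))).trans
      (h b hb (Nat.lt_succ_self b))


lemma pathLen_le_of_monotone (γ : ℝ → Pt 3) (F G : Fin 3 → ℝ → ℝ)
    (hF : ∀ c, Monotone (F c)) (hG : ∀ c, Monotone (G c))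
    (hγ : ∀ t c, γ t c = F c t - G c t) :
    pathLen nrm1 γ ≤ ENNReal.ofReal (∑ c, ((F c 1 - F c 0) + (G c 1 - G c 0))) := by
  refine iSup_le fun m => iSup_le fun t => iSup_le fun h => ?_
  obtain ⟨hmono, hmem⟩ := h
  have hnn : ∀ i : Fin m, 0 ≤ nrm1 (γ (t i.succ) - γ (t i.castSucc)) := by
    intro i
    exact Finset.sum_nonneg fun c _ => abs_nonneg _
  have key : ∀ i : Fin m, nrm1 (γ (t i.succ) - γ (t i.castSucc))
      ≤ ∑ c, ((F c (t i.succ) - F c (t i.castSucc)) + (G c (t i.succ) - G c (t i.castSucc))) := by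
    intro i
    have hts : t i.castSucc ≤ t i.succ := hmono (Fin.castSucc_le_succ i)
    unfold nrm1
    refine Finset.sum_le_sum fun c _ => ?_
    have h1 : (γ (t i.succ) - γ (t i.castSucc)) c
        = (F c (t i.succ) - F c (t i.castSucc)) - (G c (t i.succ) - G c (t i.castSucc)) := by
      simp only [Pi.sub_apply, hγ]; ring
    rw [h1]
    have hF' : 0 ≤ F c (t i.succ) - F c (t i.castSucc) := sub_nonneg.2 (hF c hts)
    have hG' : 0 ≤ G c (t i.succ) - G c (t i.castSucc) := sub_nonneg.2 (hG c hts)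
    rw [abs_le]
    constructor <;> linarith
  calc ∑ i : Fin m, ENNReal.ofReal (nrm1 (γ (t i.succ) - γ (t i.castSucc)))
      ≤ ∑ i : Fin m, ENNReal.ofReal
          (∑ c, ((F c (t i.succ) - F c (t i.castSucc)) + (G c (t i.succ) - G c (t i.castSucc)))) :=
        Finset.sum_le_sum fun i _ => ENNReal.ofReal_le_ofReal (key i)
    _ = ENNReal.ofReal (∑ i : Fin m,
          ∑ c, ((F c (t i.succ) - F c (t i.castSucc)) + (G c (t i.succ) - G c (t i.castSucc)))) := by
        rw [ENNReal.ofReal_sum_of_nonneg]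
        intro i _
        refine Finset.sum_nonneg fun c _ => ?_
        have hts : t i.castSucc ≤ t i.succ := hmono (Fin.castSucc_le_succ i)
        have hF' : 0 ≤ F c (t i.succ) - F c (t i.castSucc) := sub_nonneg.2 (hF c hts)
        have hG' : 0 ≤ G c (t i.succ) - G c (t i.castSucc) := sub_nonneg.2 (hG c hts)
        linarith
    _ ≤ ENNReal.ofReal (∑ c, ((F c 1 - F c 0) + (G c 1 - G c 0))) := by
        apply ENNReal.ofReal_le_ofReal
        rw [Finset.sum_comm]
        refine Finset.sum_le_sum fun c _ => ?_
        rw [Finset.sum_add_distrib, tele (fun j => F c (t j)), tele (fun j => G c (t j))]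
        have ht0 : (0:ℝ) ≤ t 0 := (hmem 0).1
        have ht1 : t (Fin.last m) ≤ 1 := (hmem (Fin.last m)).2
        have hF0 : F c 0 ≤ F c (t 0) := hF c ht0
        have hF1 : F c (t (Fin.last m)) ≤ F c 1 := hF c ht1
        have hG0 : G c 0 ≤ G c (t 0) := hG c ht0
        have hG1 : G c (t (Fin.last m)) ≤ G c 1 := hG c ht1
        linarith


lemma geo_lower {L : ℝ} (hL : 0 < L) (O : Finset (Set (Pt 3))) {n : ℕ}
    (hO : ∀ k, k < n - 1 → plate L k ∈ O)
    {i j : ℕ} (hi : i < n) (hj : j < n) (hij : i ≠ j) :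
    ENNReal.ofReal (2 * L) ≤ geo nrm1 {x | ∀ B ∈ O, x ∉ B} (ptk i) (ptk j) := by
  refine le_iInf fun γ => le_iInf fun hγ => ?_
  obtain ⟨hcont, h0, h1, hmemF⟩ := hγ
  set k := min i j with hk
  have hkn : k < n - 1 := by
    have h2 : min i j < max i j := min_lt_max.mpr hij
    have h3 : max i j ≤ n - 1 := Nat.le_sub_one_of_lt (max_lt hi hj)
    omega
  -- IVT
  have hfc : ContinuousOn (fun t => γ t 2) (Set.uIcc (0:ℝ) 1) := by
    rw [Set.uIcc_of_le zero_le_one]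
    exact (continuous_apply (2 : Fin 3)).comp_continuousOn hcont
  have hivt := intermediate_value_uIcc hfc
  have hmemc : (k : ℝ) + 1/2 ∈ Set.uIcc (γ 0 2) (γ 1 2) := by
    rw [h0, h1]
    have hpi : ptk i 2 = (i : ℝ) := by simp [ptk]
    have hpj : ptk j 2 = (j : ℝ) := by simp [ptk]
    rw [hpi, hpj, Set.mem_uIcc]
    rcases lt_or_gt_of_ne hij with h | h
    · left
      have hk1 : k = i := min_eq_left h.le
      have : (i : ℝ) + 1 ≤ j := by exact_mod_cast h
      constructor <;> (rw [hk1]; push_cast; linarith)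
    · right
      have hk1 : k = j := min_eq_right h.le
      have : (j : ℝ) + 1 ≤ i := by exact_mod_cast h
      constructor <;> (rw [hk1]; push_cast; linarith)
  obtain ⟨ts, hts, hval⟩ := hivt hmemc
  rw [Set.uIcc_of_le zero_le_one] at hts
  -- the crossing point is far away
  have hfar : γ ts ∉ plate L k := hmemF ts hts (plate L k) (hO k hkn)
  have hbig : L ≤ |γ ts 0| ∨ L ≤ |γ ts 1| := by
    by_contra hcon
    push_neg at hcon
    exact hfar (mem_plate.mpr ⟨⟨by cases abs_lt.mp hcon.1; linarith, (abs_lt.mp hcon.1).2.le⟩,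
      ⟨(abs_lt.mp hcon.2).1.le, (abs_lt.mp hcon.2).2.le⟩, hval⟩)
  have hnrm : ∀ a : ℕ, L ≤ nrm1 (γ ts - ptk a) ∧ L ≤ nrm1 (ptk a - γ ts) := by
    intro a
    have e0 : (γ ts - ptk a) 0 = γ ts 0 := by simp [ptk]
    have e1 : (γ ts - ptk a) 1 = γ ts 1 := by simp [ptk]
    have f0 : (ptk a - γ ts) 0 = -(γ ts 0) := by simp [ptk]
    have f1 : (ptk a - γ ts) 1 = -(γ ts 1) := by simp [ptk]
    constructor
    · rw [show nrm1 (γ ts - ptk a) = |(γ ts - ptk a) 0| + |(γ ts - ptk a) 1|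
        + |(γ ts - ptk a) 2| from Fin.sum_univ_three _]
      rw [e0, e1]
      have := abs_nonneg ((γ ts - ptk a) 2)
      rcases hbig with h | h
      · have := abs_nonneg (γ ts 1); linarith
      · have := abs_nonneg (γ ts 0); linarith
    · rw [show nrm1 (ptk a - γ ts) = |(ptk a - γ ts) 0| + |(ptk a - γ ts) 1|
        + |(ptk a - γ ts) 2| from Fin.sum_univ_three _]
      rw [f0, f1, abs_neg, abs_neg]
      have := abs_nonneg ((ptk a - γ ts) 2)
      rcases hbig with h | h
      · have := abs_nonneg (γ ts 1); linarith
      · have := abs_nonneg (γ ts 0); linarith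
  -- lower bound pathLen with the partition 0, ts, 1
  set t3 : Fin 3 → ℝ := ![0, ts, 1] with ht3
  have hmono3 : Monotone t3 := by
    rw [Fin.monotone_iff_le_succ]
    intro a
    fin_cases a <;> simp [ht3] <;> first | exact hts.1 | exact hts.2 | linarith [hts.1, hts.2]
  have hmem3 : ∀ a, t3 a ∈ Set.Icc (0:ℝ) 1 := by
    intro a
    fin_cases a <;> simp [ht3, Set.mem_Icc] <;> first | exact ⟨hts.1, hts.2⟩ | exact hts.1 | exact hts.2 | linarith [hts.1, hts.2]
  refine le_trans ?_ (le_iSup_of_le 2 (le_iSup_of_le t3 (le_iSup_of_le ⟨hmono3, hmem3⟩ le_rfl)))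
  have hsum : ∑ a : Fin 2, ENNReal.ofReal (nrm1 (γ (t3 a.succ) - γ (t3 a.castSucc)))
      = ENNReal.ofReal (nrm1 (γ ts - ptk i)) + ENNReal.ofReal (nrm1 (ptk j - γ ts)) := by
    rw [Fin.sum_univ_two]
    congr 1
    · congr 1
      rw [show t3 (0 : Fin 2).succ = ts from rfl, show t3 (0 : Fin 2).castSucc = 0 from rfl, h0]
    · congr 1
      rw [show t3 (1 : Fin 2).succ = 1 from rfl, show t3 (1 : Fin 2).castSucc = ts from rfl, h1]
  rw [hsum, show (2:ℝ) * L = L + L by ring, ENNReal.ofReal_add hL.le hL.le]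
  exact add_le_add (ENNReal.ofReal_le_ofReal (hnrm i).1) (ENNReal.ofReal_le_ofReal (hnrm j).2)


lemma geo_upper {L : ℝ} (hL : 0 < L) (O : Finset (Set (Pt 3)))
    (hO : ∀ B ∈ O, ∃ k : ℕ, B = plate L k)
    {i j : ℕ} (hij : i ≠ j) {n : ℕ} (hi : i < n) (hj : j < n) :
    geo nrm1 {x | ∀ B ∈ O, x ∉ B} (ptk i) (ptk j) ≤ ENNReal.ofReal (2 * L + 2 + n) := by
  set d : ℝ := (j : ℝ) - (i : ℝ) with hdd
  have hd : d ≠ 0 := by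
    have h' : (j:ℝ) ≠ (i:ℝ) := by exact_mod_cast hij.symm
    simp only [hdd, sub_ne_zero]
    exact h'
  have hd0 : (0:ℝ) < |d| := abs_pos.mpr hd
  have hdn : |d| ≤ (n : ℝ) := by
    have h1 : (i : ℝ) < n := by exact_mod_cast hi
    have h2 : (j : ℝ) < n := by exact_mod_cast hj
    have h3 : (0:ℝ) ≤ i := Nat.cast_nonneg i
    have h4 : (0:ℝ) ≤ j := Nat.cast_nonneg j
    rw [abs_le]; constructor <;> simp only [hdd] <;> linarith
  set S : ℝ := 2 * (L + 1) + |d| with hS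
  have hS0 : 0 < S := by positivity
  set sgn : ℝ := d / |d| with hsgn
  have hsgnd : sgn * |d| = d := div_mul_cancel₀ d (ne_of_gt hd0)
  have habs_sgn : max sgn 0 + max (-sgn) 0 = 1 := by
    rcases abs_choice d with h | h
    · have hs1 : sgn = 1 := by rw [hsgn, h, div_self hd]
      rw [hs1]; norm_num
    · have hs1 : sgn = -1 := by
        rw [hsgn, h]
        field_simp
      rw [hs1]; norm_num
  set F0 : ℝ → ℝ := fun t => min (S * t) (L + 1) with hF0
  set G0 : ℝ → ℝ := fun t => max (S * t - (S - (L + 1))) 0 with hG0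
  set clampf : ℝ → ℝ := fun t => max 0 (min (S * t - (L + 1)) |d|) with hclampf
  set F2 : ℝ → ℝ := fun t => (i : ℝ) + max sgn 0 * clampf t with hF2
  set G2 : ℝ → ℝ := fun t => max (-sgn) 0 * clampf t with hG2
  set γ : ℝ → Pt 3 := fun t => ![F0 t - G0 t, 0, F2 t - G2 t] with hγ
  have hmul : Monotone fun t : ℝ => S * t := fun a b h => mul_le_mul_of_nonneg_left h hS0.le
  have hmulc : Monotone fun t : ℝ => S * t - (L + 1) := by
    intro a b h; simp only [sub_le_sub_iff_right]; exact hmul h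
  have hmulc2 : Monotone fun t : ℝ => S * t - (S - (L + 1)) := by
    intro a b h; simp only [sub_le_sub_iff_right]; exact hmul h
  have hF0m : Monotone F0 := hmul.min monotone_const
  have hG0m : Monotone G0 := hmulc2.max monotone_const
  have hclampm : Monotone clampf := monotone_const.max (hmulc.min monotone_const)
  have hF2m : Monotone F2 := (hclampm.const_mul (le_max_right sgn 0)).const_add (i : ℝ)
  have hG2m : Monotone G2 := hclampm.const_mul (le_max_right (-sgn) 0)
  -- key value computations
  have hF00 : F0 0 = 0 := by
    simp only [hF0, mul_zero]
    exact min_eq_left (by linarith)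
  have hF01 : F0 1 = L + 1 := by
    simp only [hF0, mul_one]
    refine min_eq_right ?_
    have := abs_nonneg d
    simp only [hS]; linarith
  have hG00 : G0 0 = 0 := by
    simp only [hG0, mul_zero, zero_sub]
    refine max_eq_right ?_
    have := abs_nonneg d
    simp only [hS]; linarith
  have hG01 : G0 1 = L + 1 := by
    simp only [hG0, mul_one]
    rw [show S - (S - (L+1)) = L + 1 by ring]
    exact max_eq_left (by linarith)
  have hcl0 : clampf 0 = 0 := by
    simp only [hclampf, mul_zero, zero_sub]
    refine max_eq_left ?_
    refine le_trans (min_le_left _ _) (by linarith)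
  have hcl1 : clampf 1 = |d| := by
    simp only [hclampf, mul_one]
    rw [min_eq_right (by simp only [hS]; linarith)]
    exact max_eq_right hd0.le
  have hz1 : F2 1 - G2 1 = (j : ℝ) := by
    simp only [hF2, hG2, hcl1]
    have : max sgn 0 * |d| - max (-sgn) 0 * |d| = sgn * |d| := by
      rcases le_total sgn 0 with h | h
      · rw [max_eq_right h, max_eq_left (by linarith)]
        ring
      · rw [max_eq_left h, max_eq_right (by linarith)]
        ring
    rw [show (i:ℝ) + max sgn 0 * |d| - max (-sgn) 0 * |d|
      = (i:ℝ) + (max sgn 0 * |d| - max (-sgn) 0 * |d|) by ring, this, hsgnd, hdd]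
    ring
  -- the path is admissible
  have hpath : IsPathIn {x | ∀ B ∈ O, x ∉ B} (ptk i) (ptk j) γ := by
    refine ⟨?_, ?_, ?_, ?_⟩
    · refine Continuous.continuousOn ?_
      refine continuous_pi fun c => ?_
      fin_cases c
      · show Continuous fun t => (![F0 t - G0 t, 0, F2 t - G2 t]) 0
        simp only [Matrix.cons_val_zero]
        fun_prop
      · show Continuous fun t => (![F0 t - G0 t, 0, F2 t - G2 t]) 1
        simp only [Matrix.cons_val_one, Matrix.head_cons]
        fun_prop
      · show Continuous fun t => (![F0 t - G0 t, 0, F2 t - G2 t]) 2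
        simp only [Matrix.cons_val_two, Matrix.tail_cons, Matrix.head_cons]
        fun_prop
    · funext c
      fin_cases c <;> simp [hγ, ptk, hF00, hG00, hF2, hG2, hcl0]
    · funext c
      fin_cases c <;> simp only [hγ, ptk] <;>
        simp [hF01, hG01, hz1, show F2 1 - G2 1 = (j:ℝ) from hz1]
    · intro t ht B hB
      obtain ⟨k, rfl⟩ := hO B hB
      intro hmem
      obtain ⟨⟨hx1, hx2⟩, _, hz⟩ := mem_plate.mp hmem
      have hzval : γ t 2 = F2 t - G2 t := by simp [hγ]
      have hxval : γ t 0 = F0 t - G0 t := by simp [hγ]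
      rw [hzval] at hz
      rcases le_or_gt (S * t - (L + 1)) 0 with hc1 | hc1
      · have hcl : clampf t = 0 := by
          simp only [hclampf]
          refine max_eq_left (le_trans (min_le_left _ _) hc1)
        simp only [hF2, hG2, hcl] at hz
        simp only [mul_zero, add_zero, sub_zero] at hz
        exact nat_ne_half i k hz
      · rcases le_or_gt |d| (S * t - (L + 1)) with hc2 | hc2
        · have hcl : clampf t = |d| := by
            simp only [hclampf]
            rw [min_eq_right hc2]
            exact max_eq_right hd0.le
          simp only [hF2, hG2, hcl] at hz
          rw [show (i:ℝ) + max sgn 0 * |d| - max (-sgn) 0 * |d|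
            = (i:ℝ) + (max sgn 0 * |d| - max (-sgn) 0 * |d|) by ring] at hz
          have : max sgn 0 * |d| - max (-sgn) 0 * |d| = sgn * |d| := by
            rcases le_total sgn 0 with h | h
            · rw [max_eq_right h, max_eq_left (by linarith)]; ring
            · rw [max_eq_left h, max_eq_right (by linarith)]; ring
          rw [this, hsgnd] at hz
          have hz' : (j : ℝ) = (k:ℝ) + 1/2 := by
            rw [hdd] at hz; linarith
          exact nat_ne_half j k hz'
        · -- middle region: x-coordinate equals L+1 > L
          have hF0t : F0 t = L + 1 := min_eq_right (by linarith)
          have hG0t : G0 t = 0 := by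
            refine max_eq_right ?_
            simp only [hS]
            simp only [hS] at hc2
            linarith
          rw [hxval, hF0t, hG0t, sub_zero] at hx2
          linarith
  refine le_trans (iInf₂_le γ hpath) ?_
  refine le_trans (pathLen_le_of_monotone γ ![F0, fun _ => 0, F2] ![G0, fun _ => 0, G2]
    ?_ ?_ ?_) ?_
  · intro c; fin_cases c <;> simpa using by first | exact hF0m | exact monotone_const | exact hF2m
  · intro c; fin_cases c <;> simpa using by first | exact hG0m | exact monotone_const | exact hG2m
  · intro t c
    fin_cases c <;> simp [hγ]
  · apply ENNReal.ofReal_le_ofReal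
    rw [Fin.sum_univ_three]
    simp only [Matrix.cons_val_zero, Matrix.cons_val_one, Matrix.head_cons,
      Matrix.cons_val_two, Matrix.tail_cons]
    rw [hF00, hF01, hG00, hG01]
    simp only [hF2, hG2, hcl1, hcl0, mul_zero, add_zero, sub_zero]
    have : max sgn 0 * |d| + max (-sgn) 0 * |d| = |d| := by
      rw [← add_mul, habs_sgn, one_mul]
    nlinarith [this]

/-- a lower-bound configuration in ℝ³ amid flat axis-parallel
rectangle obstacles in which every non-complete graph has spanning ratio
larger than 2 − ε. Here paths must avoid the obstacles themselves. -/
theorem statement_7 (ε : ℝ) (hε0 : 0 < ε) (hε1 : ε < 1) (n : ℕ) (hn : 2 ≤ n) :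
    ∃ (P : Finset (Pt 3)) (O : Finset (Set (Pt 3))),
      P.card = n ∧
      (∀ B ∈ O, IsFlatBox B) ∧
      (O : Set (Set (Pt 3))).Pairwise Disjoint ∧
      (∀ p ∈ P, ∀ B ∈ O, p ∉ B) ∧
      ∀ E : Set (Sym2 (Pt 3)),
        (∀ e ∈ E, ∀ x ∈ e, x ∈ P) →
        (∃ p ∈ P, ∃ q ∈ P, p ≠ q ∧ s(p, q) ∉ E) →
        ∃ p ∈ P, ∃ q ∈ P, p ≠ q ∧ s(p, q) ∉ E ∧
          ENNReal.ofReal (2 - ε) * geo nrm1 {x | ∀ B ∈ O, x ∉ B} p q <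
            graphDist (geo nrm1 {x | ∀ B ∈ O, x ∉ B}) E p q := by
  classical
  have hε2 : (0:ℝ) < 2 - ε := by linarith
  have hA : (0:ℝ) < (n:ℝ) + 2 := by positivity
  set L : ℝ := ((n:ℝ) + 2) / ε + ((n:ℝ) + 2) with hLdef
  have hL : 0 < L := by
    have := div_pos hA hε0
    simp only [hLdef]
    linarith
  set P : Finset (Pt 3) := (Finset.range n).image ptk with hP
  set O : Finset (Set (Pt 3)) := (Finset.range (n-1)).image (plate L) with hO
  have hptk_inj : ∀ a b : ℕ, ptk a = ptk b → a = b := by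
    intro a b hab
    have := congrFun hab 2
    simp only [ptk, Matrix.cons_val_two, Matrix.tail_cons, Matrix.head_cons] at this
    exact_mod_cast this
  have hOk : ∀ k, k < n - 1 → plate L k ∈ O := by
    intro k hk
    exact Finset.mem_image_of_mem _ (Finset.mem_range.mpr hk)
  have hOplate : ∀ B ∈ O, ∃ k : ℕ, B = plate L k := by
    intro B hB
    obtain ⟨k, _, rfl⟩ := Finset.mem_image.mp hB
    exact ⟨k, rfl⟩
  have hz_plate : ∀ (k : ℕ) (y : Pt 3), y ∈ plate L k → y 2 = (k:ℝ) + 1/2 := by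
    intro k y hy
    exact (mem_plate.mp hy).2.2
  refine ⟨P, O, ?_, ?_, ?_, ?_, ?_⟩
  · rw [hP, Finset.card_image_of_injOn (fun a _ b _ hab => hptk_inj a b hab),
      Finset.card_range]
  · intro B hB
    obtain ⟨k, rfl⟩ := hOplate B hB
    refine ⟨![-L, -L, (k:ℝ) + 1/2], ![L, L, (k:ℝ) + 1/2], ?_, ⟨2, by simp⟩, rfl⟩
    intro c
    fin_cases c <;> simp <;> linarith
  · intro B1 h1 B2 h2 hne
    obtain ⟨k1, rfl⟩ := hOplate B1 h1
    obtain ⟨k2, rfl⟩ := hOplate B2 h2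
    have hk12 : k1 ≠ k2 := fun h => hne (by rw [h])
    refine Set.disjoint_left.mpr fun y hy1 hy2 => ?_
    have e1 := hz_plate k1 y hy1
    have e2 := hz_plate k2 y hy2
    rw [e1] at e2
    have : (k1:ℝ) = k2 := by linarith
    exact hk12 (by exact_mod_cast this)
  · intro p hp B hB
    obtain ⟨a, _, rfl⟩ := Finset.mem_image.mp hp
    obtain ⟨k, rfl⟩ := hOplate B hB
    intro hmem
    have := hz_plate k _ hmem
    simp only [ptk, Matrix.cons_val_two, Matrix.tail_cons, Matrix.head_cons] at this
    exact nat_ne_half a k this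
  · intro E hE ⟨p, hp, q, hq, hpq, hpqE⟩
    refine ⟨p, hp, q, hq, hpq, hpqE, ?_⟩
    obtain ⟨i, hi, hpi⟩ := Finset.mem_image.mp hp
    obtain ⟨j, hj, hqj⟩ := Finset.mem_image.mp hq
    rw [Finset.mem_range] at hi hj
    have hij : i ≠ j := fun h => hpq (by rw [← hpi, ← hqj, h])
    have hgu : geo nrm1 {x | ∀ B ∈ O, x ∉ B} p q ≤ ENNReal.ofReal (2*L + 2 + n) := by
      rw [← hpi, ← hqj]
      exact geo_upper hL O hOplate hij hi hj
    have hgl : ∀ a b : ℕ, a < n → b < n → a ≠ b →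
        ENNReal.ofReal (2*L) ≤ geo nrm1 {x | ∀ B ∈ O, x ∉ B} (ptk a) (ptk b) := by
      intro a b ha hb hab
      exact geo_lower hL O hOk ha hb hab
    have hgraph : ENNReal.ofReal (4*L) ≤
        graphDist (geo nrm1 {x | ∀ B ∈ O, x ∉ B}) E p q := by
      refine le_iInf fun m => le_iInf fun x => le_iInf fun hx => ?_
      obtain ⟨hx0, hxl, hxe⟩ := hx
      set D : Finset (Fin m) := Finset.univ.filter (fun a => x a.castSucc ≠ x a.succ) with hD
      have hstep_lb : ∀ a ∈ D,
          ENNReal.ofReal (2*L) ≤ geo nrm1 {x | ∀ B ∈ O, x ∉ B} (x a.castSucc) (x a.succ) := by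
        intro a ha
        have hne := (Finset.mem_filter.mp ha).2
        have hedge := hxe a
        have h1 : x a.castSucc ∈ P := hE _ hedge _ (Sym2.mem_mk_left _ _)
        have h2 : x a.succ ∈ P := hE _ hedge _ (Sym2.mem_mk_right _ _)
        obtain ⟨a1, ha1, e1⟩ := Finset.mem_image.mp h1
        obtain ⟨a2, ha2, e2⟩ := Finset.mem_image.mp h2
        rw [Finset.mem_range] at ha1 ha2
        have ha12 : a1 ≠ a2 := by
          intro h
          apply hne
          rw [← e1, ← e2, h]
        rw [← e1, ← e2]
        exact hgl a1 a2 ha1 ha2 ha12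
      rcases Nat.lt_or_ge D.card 2 with hcard | hcard
      · exfalso
        set X : ℕ → Pt 3 := fun jj => x ⟨min jj m, Nat.lt_succ_of_le (min_le_right _ _)⟩ with hX
        have hXstep : ∀ a : Fin m, x a.castSucc = X a.val ∧ x a.succ = X (a.val + 1) := by
          intro a
          have hlt := a.isLt
          constructor
          · simp only [hX]
            apply congrArg
            apply Fin.eq_of_val_eq
            simp [Nat.min_eq_left a.isLt.le]
          · simp only [hX]
            apply congrArg
            apply Fin.eq_of_val_eq
            simp [Nat.min_eq_left (Nat.succ_le_of_lt a.isLt)]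
        have hX0 : X 0 = p := by
          rw [← hx0]
          simp only [hX]
          apply congrArg
          apply Fin.eq_of_val_eq
          simp
        have hXm : X m = q := by
          rw [← hxl]
          simp only [hX]
          apply congrArg
          apply Fin.eq_of_val_eq
          simp
        have hstepeq : ∀ (jj : ℕ) (h : jj < m), (⟨jj, h⟩ : Fin m) ∉ D → X jj = X (jj+1) := by
          intro jj h hnd
          have heq : x (⟨jj, h⟩ : Fin m).castSucc = x (⟨jj, h⟩ : Fin m).succ := by
            by_contra hne
            exact hnd (Finset.mem_filter.mpr ⟨Finset.mem_univ _, hne⟩)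
          rw [(hXstep ⟨jj, h⟩).1, (hXstep ⟨jj, h⟩).2] at heq
          exact heq
        have hcases : D.card = 0 ∨ D.card = 1 := by omega
        rcases hcases with h0 | h1
        · have hDe : D = ∅ := Finset.card_eq_zero.mp h0
          have : X 0 = X m := by
            refine chain_eq X 0 m (Nat.zero_le m) fun jj _ hjm => ?_
            exact hstepeq jj hjm (by rw [hDe]; exact Finset.notMem_empty _)
          rw [hX0, hXm] at this
          exact hpq this
        · obtain ⟨kk, hkk⟩ := Finset.card_eq_one.mp h1
          have hmem_iff : ∀ a : Fin m, a ∈ D ↔ a = kk := by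
            intro a
            rw [hkk, Finset.mem_singleton]
          have h1' : X 0 = X kk.val := by
            refine chain_eq X 0 kk.val (Nat.zero_le _) fun jj _ hjk => ?_
            refine hstepeq jj (hjk.trans kk.isLt) ?_
            rw [hmem_iff]
            intro h
            have : jj = kk.val := by rw [← h]
            omega
          have h2' : X (kk.val + 1) = X m := by
            refine chain_eq X (kk.val + 1) m (Nat.succ_le_of_lt kk.isLt) fun jj hj1 hjm => ?_
            refine hstepeq jj hjm ?_
            rw [hmem_iff]
            intro h
            have : jj = kk.val := by rw [← h]
            omega
          have hkc : x kk.castSucc = p := by rw [(hXstep kk).1, ← h1', hX0]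
          have hks : x kk.succ = q := by rw [(hXstep kk).2, h2', hXm]
          apply hpqE
          have := hxe kk
          rw [hkc, hks] at this
          exact this
      · obtain ⟨a, ha, b, hb, hab⟩ := Finset.one_lt_card.mp hcard
        have hsum : ∑ c ∈ ({a, b} : Finset (Fin m)),
              geo nrm1 {x | ∀ B ∈ O, x ∉ B} (x c.castSucc) (x c.succ)
            ≤ ∑ c : Fin m, geo nrm1 {x | ∀ B ∈ O, x ∉ B} (x c.castSucc) (x c.succ) :=
          Finset.sum_le_sum_of_subset (Finset.subset_univ _)
        rw [Finset.sum_pair hab] at hsum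
        refine le_trans ?_ hsum
        rw [show (4:ℝ)*L = 2*L + 2*L by ring, ENNReal.ofReal_add (by linarith) (by linarith)]
        exact add_le_add (hstep_lb a ha) (hstep_lb b hb)
    calc ENNReal.ofReal (2 - ε) * geo nrm1 {x | ∀ B ∈ O, x ∉ B} p q
        ≤ ENNReal.ofReal (2 - ε) * ENNReal.ofReal (2*L + 2 + n) := mul_le_mul_right hgu _
      _ = ENNReal.ofReal ((2 - ε) * (2*L + 2 + n)) := (ENNReal.ofReal_mul hε2.le).symm
      _ < ENNReal.ofReal (4*L) := by
          rw [ENNReal.ofReal_lt_ofReal_iff (by linarith)]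
          have hεL : ε * L = ((n:ℝ) + 2) + ε * ((n:ℝ) + 2) := by
            rw [hLdef, mul_add, mul_div_cancel₀ _ (ne_of_gt hε0)]
          nlinarith [mul_pos hε0 hA]
      _ ≤ graphDist (geo nrm1 {x | ∀ B ∈ O, x ∉ B}) E p q := hgraph


end GeoSpanner
end

section
/- Let 𝒪 be a finite family of pairwise disjoint closed axis-parallel boxes in ℝ³ (obstacles). Let p, q ∈ ℝ³ with pᵢ ≤ qᵢ for i = 1, 2, 3, and let o ∈ B(p,q) lie outside the interior of every obstacle. Then there exists a point w ∈ B(p,q), lying outside the interior of every obstacle, such that at least two of the three coordinates of w equal the corresponding coordinates of q, and σ₁(o,w) ≤ ‖o − q‖₁, where σ₁ denotes the L1-geodesic distance amid the obstacles. (The point w lies on one of the three edges of B(p,q) incident to q and is reachable from o by an obstacle-avoiding path that is monotone in all three coordinates.) -/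
open scoped ENNReal

namespace GeoSpanner

lemma telescope_fin (n : ℕ) (F : Fin (n+1) → ℝ) :
    ∑ i : Fin n, (F i.succ - F i.castSucc) = F (Fin.last n) - F 0 := by
  induction n with
  | zero => simp
  | succ n ih =>
    rw [Fin.sum_univ_castSucc]
    have h1 : ∀ i : Fin n, (F (i.castSucc).succ - F (i.castSucc).castSucc)
        = ((fun j : Fin (n+1) => F j.castSucc) i.succ - (fun j : Fin (n+1) => F j.castSucc) i.castSucc) := by
      intro i; rfl
    rw [Finset.sum_congr rfl (fun i _ => h1 i), ih (fun j => F j.castSucc)]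
    simp [Fin.succ_last]

lemma interior_Icc_pi {d : ℕ} (a b : Pt d) :
    interior (Set.Icc a b) = {z : Pt d | ∀ l, a l < z l ∧ z l < b l} := by
  rw [← Set.pi_univ_Icc, interior_pi_set Set.finite_univ]
  ext z
  simp [Set.mem_pi]

lemma pathLen_le_of_coord_mono {d : ℕ} {γ : ℝ → Pt d} (h : ∀ l, Monotone fun t => γ t l) :
    pathLen nrm1 γ ≤ ENNReal.ofReal (∑ l, (γ 1 l - γ 0 l)) := by
  refine iSup_le fun n => iSup_le fun t => iSup_le fun ht => ?_
  obtain ⟨hmono, hIcc⟩ := ht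
  have hle : ∀ i : Fin n, t i.castSucc ≤ t i.succ :=
    fun i => hmono (Fin.castSucc_lt_succ : i.castSucc < i.succ).le
  have key : ∀ i : Fin n, nrm1 (γ (t i.succ) - γ (t i.castSucc))
      = ∑ l, (γ (t i.succ) l - γ (t i.castSucc) l) := by
    intro i
    unfold nrm1
    refine Finset.sum_congr rfl fun l _ => ?_
    rw [Pi.sub_apply, abs_of_nonneg (sub_nonneg.2 (h l (hle i)))]
  have hnn : ∀ i ∈ (Finset.univ : Finset (Fin n)),
      0 ≤ nrm1 (γ (t i.succ) - γ (t i.castSucc)) := by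
    intro i _
    rw [key i]
    exact Finset.sum_nonneg fun l _ => sub_nonneg.2 (h l (hle i))
  rw [← ENNReal.ofReal_sum_of_nonneg hnn]
  apply ENNReal.ofReal_le_ofReal
  calc ∑ i : Fin n, nrm1 (γ (t i.succ) - γ (t i.castSucc))
      = ∑ i : Fin n, ∑ l, (γ (t i.succ) l - γ (t i.castSucc) l) :=
        Finset.sum_congr rfl fun i _ => key i
    _ = ∑ l, ∑ i : Fin n, (γ (t i.succ) l - γ (t i.castSucc) l) := Finset.sum_comm
    _ = ∑ l, (γ (t (Fin.last n)) l - γ (t 0) l) :=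
        Finset.sum_congr rfl fun l _ => telescope_fin n (fun j => γ (t j) l)
    _ ≤ ∑ l, (γ 1 l - γ 0 l) := by
        refine Finset.sum_le_sum fun l _ => ?_
        have h1 : γ (t (Fin.last n)) l ≤ γ 1 l := h l (hIcc (Fin.last n)).2
        have h2 : γ 0 l ≤ γ (t 0) l := h l (hIcc 0).1
        linarith

lemma two_lt (x q : Pt 3) (hxq : x ≤ q)
    (h : ¬ ∃ i j : Fin 3, i ≠ j ∧ x i = q i ∧ x j = q j) :
    ∃ i j : Fin 3, i ≠ j ∧ x i < q i ∧ x j < q j := by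
  push_neg at h
  rcases (hxq 0).lt_or_eq with h0 | h0
  · rcases (hxq 1).lt_or_eq with h1 | h1
    · exact ⟨0, 1, by decide, h0, h1⟩
    · rcases (hxq 2).lt_or_eq with h2 | h2
      · exact ⟨0, 2, by decide, h0, h2⟩
      · exact absurd h2 (h 1 2 (by decide) h1)
  · rcases (hxq 1).lt_or_eq with h1 | h1
    · rcases (hxq 2).lt_or_eq with h2 | h2
      · exact ⟨1, 2, by decide, h1, h2⟩
      · exact absurd h2 (h 0 2 (by decide) h0)
    · exact absurd h1 (h 0 1 (by decide) h0)

lemma key_lemma (O : Finset (Set (Pt 3))) (hO : IsObstacleFamily O) (q x : Pt 3)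
    (hxf : x ∈ free O) (hxq : x ≤ q) :
    ∃ (w : Pt 3) (γ : ℝ → Pt 3), x ≤ w ∧ w ≤ q ∧ w ∈ free O ∧
      (∃ i j : Fin 3, i ≠ j ∧ w i = q i ∧ w j = q j) ∧
      Continuous γ ∧ (∀ l, Monotone fun t => γ t l) ∧ γ 0 = x ∧ γ 1 = w ∧
      (∀ t ∈ Set.Icc (0:ℝ) 1, γ t ∈ free O) := by
  classical
  obtain ⟨hbox, hdisj⟩ := hO
  choose a b hab hB using hbox
  -- interior description
  have hint : ∀ (B) (hBm : B ∈ O),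
      interior B = {z : Pt 3 | ∀ l, a B hBm l < z l ∧ z l < b B hBm l} := by
    intro B hBm
    conv_lhs => rw [hB B hBm]
    exact interior_Icc_pi _ _
  have hfree_iff : ∀ z : Pt 3, z ∈ free O ↔
      ∀ (B) (hBm : B ∈ O), ¬ ∀ l, a B hBm l < z l ∧ z l < b B hBm l := by
    intro z
    constructor
    · intro hz B hBm hc
      exact hz B hBm ((hint B hBm) ▸ hc)
    · intro hz B hBm hc
      exact hz B hBm (by rwa [hint B hBm] at hc)
  suffices H : ∀ (n : ℕ) (x : Pt 3),
      (Finset.univ.filter fun l => x l < q l).card +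
        (∑ B ∈ O.attach, (Finset.univ.filter
          fun l : Fin 3 => x l < a B.1 B.2 l ∧ a B.1 B.2 l ≤ q l).card) ≤ n →
      x ∈ free O → x ≤ q →
      ∃ (w : Pt 3) (γ : ℝ → Pt 3), x ≤ w ∧ w ≤ q ∧ w ∈ free O ∧
        (∃ i j : Fin 3, i ≠ j ∧ w i = q i ∧ w j = q j) ∧
        Continuous γ ∧ (∀ l, Monotone fun t => γ t l) ∧ γ 0 = x ∧ γ 1 = w ∧
        (∀ t ∈ Set.Icc (0:ℝ) 1, γ t ∈ free O) by
    exact H _ x le_rfl hxf hxq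
  intro n
  induction n with
  | zero =>
    intro x hN hxf hxq
    by_cases hdone : ∃ i j : Fin 3, i ≠ j ∧ x i = q i ∧ x j = q j
    · exact ⟨x, fun _ => x, le_rfl, hxq, hxf, hdone, continuous_const,
        fun l => monotone_const, rfl, rfl, fun t _ => hxf⟩
    · obtain ⟨i, j, hij, hxi, hxj⟩ := two_lt x q hxq hdone
      have : 0 < (Finset.univ.filter fun l => x l < q l).card :=
        Finset.card_pos.2 ⟨i, Finset.mem_filter.2 ⟨Finset.mem_univ _, hxi⟩⟩
      omega
  | succ n ih =>
    intro x hN hxf hxq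
    by_cases hdone : ∃ i j : Fin 3, i ≠ j ∧ x i = q i ∧ x j = q j
    · exact ⟨x, fun _ => x, le_rfl, hxq, hxf, hdone, continuous_const,
        fun l => monotone_const, rfl, rfl, fun t _ => hxf⟩
    obtain ⟨i, j, hij, hxi, hxj⟩ := two_lt x q hxq hdone
    -- Blocked directions
    set Blocked : Fin 3 → Prop := fun d => ∃ (B : Set (Pt 3)) (hBm : B ∈ O),
      x d = a B hBm d ∧ a B hBm d < b B hBm d ∧
      ∀ l, l ≠ d → a B hBm l < x l ∧ x l < b B hBm l with hBlocked
    have hnotboth : ∀ d d', d ≠ d' → Blocked d → Blocked d' → False := by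
      rintro d d' hdd ⟨B, hBm, hxa, hab2, hlo⟩ ⟨B2, hBm2, hxa2, hab3, hlo2⟩
      have hxB : x ∈ B := by
        rw [hB B hBm, Set.mem_Icc]
        constructor <;> intro l
        · by_cases hl : l = d
          · subst hl; exact hxa.ge
          · exact (hlo l hl).1.le
        · by_cases hl : l = d
          · subst hl; rw [hxa]; exact (hab B hBm l).trans le_rfl
          · exact (hlo l hl).2.le
      have hxB2 : x ∈ B2 := by
        rw [hB B2 hBm2, Set.mem_Icc]
        constructor <;> intro l
        · by_cases hl : l = d'
          · subst hl; exact hxa2.ge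
          · exact (hlo2 l hl).1.le
        · by_cases hl : l = d'
          · subst hl; rw [hxa2]; exact hab B2 hBm2 l
          · exact (hlo2 l hl).2.le
      by_cases hBB : B = B2
      · subst hBB
        have h1 : a B hBm d' < x d' := (hlo d' (Ne.symm hdd)).1
        rw [hxa2] at h1
        exact lt_irrefl _ h1
      · exact Set.disjoint_left.1 (hdisj hBm hBm2 hBB) hxB hxB2
    have hd : ∃ d, x d < q d ∧ ¬ Blocked d := by
      by_cases hbi : Blocked i
      · exact ⟨j, hxj, fun hbj => hnotboth i j hij hbi hbj⟩
      · exact ⟨i, hxi, hbi⟩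
    obtain ⟨d, hdq, hnb⟩ := hd
    -- the stopping value c
    set S : Finset ℝ := insert (q d) ((O.attach.filter fun B =>
        x d < a B.1 B.2 d ∧ ∀ l, l ≠ d → a B.1 B.2 l < x l ∧ x l < b B.1 B.2 l).image
        fun B => a B.1 B.2 d) with hS
    have hSne : S.Nonempty := ⟨q d, Finset.mem_insert_self _ _⟩
    set c := S.min' hSne with hc
    have hcS : c ∈ S := S.min'_mem hSne
    have hcq : c ≤ q d := S.min'_le _ (Finset.mem_insert_self _ _)
    have hxc : x d < c := by
      rw [hc, Finset.lt_min'_iff]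
      intro y hy
      rcases Finset.mem_insert.1 hy with h | h
      · rwa [h]
      · obtain ⟨B, hBf, hBy⟩ := Finset.mem_image.1 h
        rw [← hBy]
        exact (Finset.mem_filter.1 hBf).2.1
    set y : Pt 3 := Function.update x d c with hy
    have hxy : x ≤ y := by
      intro l
      by_cases hl : l = d
      · subst hl; rw [hy, Function.update_self]; exact hxc.le
      · rw [hy, Function.update_of_ne hl]
    have hyq : y ≤ q := by
      intro l
      by_cases hl : l = d
      · subst hl; rw [hy, Function.update_self]; exact hcq
      · rw [hy, Function.update_of_ne hl]; exact hxq l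
    -- the segment from x to y is free
    have hseg : ∀ s, x d ≤ s → s ≤ c → Function.update x d s ∈ free O := by
      intro s hs1 hs2
      rw [hfree_iff]
      intro B hBm hmem
      have hlo : ∀ l, l ≠ d → a B hBm l < x l ∧ x l < b B hBm l := by
        intro l hl
        have := hmem l
        rwa [Function.update_of_ne hl] at this
      have hds : a B hBm d < s ∧ s < b B hBm d := by
        have := hmem d
        rwa [Function.update_self] at this
      have hxd : x d < a B hBm d := by
        rcases lt_trichotomy (x d) (a B hBm d) with h | h | h
        · exact h
        · exact absurd ⟨B, hBm, h, lt_of_le_of_lt (h.symm.le.trans hs1) hds.2, hlo⟩ hnb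
        · exact absurd (fun l => by
            by_cases hl : l = d
            · subst hl; exact ⟨h, lt_of_le_of_lt hs1 hds.2⟩
            · exact hlo l hl) ((hfree_iff x).1 hxf B hBm)
      have hcB : c ≤ a B hBm d := by
        refine S.min'_le _ (Finset.mem_insert_of_mem (Finset.mem_image_of_mem _
          (Finset.mem_filter.2 ⟨Finset.mem_attach _ ⟨B, hBm⟩, hxd, hlo⟩)))
      exact absurd (lt_of_lt_of_le hds.1 (hs2.trans hcB)) (lt_irrefl _)
    have hyfree : y ∈ free O := hseg c hxc.le le_rfl
    -- N decreases
    have hNdec : (Finset.univ.filter fun l => y l < q l).card +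
        (∑ B ∈ O.attach, (Finset.univ.filter
          fun l : Fin 3 => y l < a B.1 B.2 l ∧ a B.1 B.2 l ≤ q l).card) ≤ n := by
      have h1sub : (Finset.univ.filter fun l => y l < q l) ⊆
          (Finset.univ.filter fun l => x l < q l) := by
        intro l hl
        rw [Finset.mem_filter] at hl ⊢
        exact ⟨hl.1, lt_of_le_of_lt (hxy l) hl.2⟩
      have h2sub : ∀ B : {B // B ∈ O}, (Finset.univ.filter
          fun l : Fin 3 => y l < a B.1 B.2 l ∧ a B.1 B.2 l ≤ q l) ⊆
          (Finset.univ.filter fun l : Fin 3 => x l < a B.1 B.2 l ∧ a B.1 B.2 l ≤ q l) := by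
        intro B l hl
        rw [Finset.mem_filter] at hl ⊢
        exact ⟨hl.1, lt_of_le_of_lt (hxy l) hl.2.1, hl.2.2⟩
      rcases Finset.mem_insert.1 hcS with hcqd | hcim
      · -- c = q d : the first count strictly decreases
        have hdx : d ∈ Finset.univ.filter fun l => x l < q l :=
          Finset.mem_filter.2 ⟨Finset.mem_univ _, hdq⟩
        have hdy : d ∉ Finset.univ.filter fun l => y l < q l := by
          rw [Finset.mem_filter]
          rintro ⟨-, hlt⟩
          rw [hy, Function.update_self, hcqd] at hlt
          exact lt_irrefl _ hlt
        have hlt1 : (Finset.univ.filter fun l => y l < q l).card <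
            (Finset.univ.filter fun l => x l < q l).card :=
          Finset.card_lt_card ((Finset.ssubset_iff_of_subset h1sub).2 ⟨d, hdx, hdy⟩)
        have hle2 : (∑ B ∈ O.attach, (Finset.univ.filter
              fun l : Fin 3 => y l < a B.1 B.2 l ∧ a B.1 B.2 l ≤ q l).card) ≤
            ∑ B ∈ O.attach, (Finset.univ.filter
              fun l : Fin 3 => x l < a B.1 B.2 l ∧ a B.1 B.2 l ≤ q l).card :=
          Finset.sum_le_sum fun B _ => Finset.card_le_card (h2sub B)
        omega
      · -- c is the bottom face of some box B0
        obtain ⟨B0, hB0f, hB0c⟩ := Finset.mem_image.1 hcim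
        have hB0filter := (Finset.mem_filter.1 hB0f).2
        have hdx : d ∈ Finset.univ.filter
            fun l : Fin 3 => x l < a B0.1 B0.2 l ∧ a B0.1 B0.2 l ≤ q l :=
          Finset.mem_filter.2 ⟨Finset.mem_univ _, hB0filter.1, by rw [hB0c]; exact hcq⟩
        have hdy : d ∉ Finset.univ.filter
            fun l : Fin 3 => y l < a B0.1 B0.2 l ∧ a B0.1 B0.2 l ≤ q l := by
          rw [Finset.mem_filter]
          rintro ⟨-, hlt, -⟩
          rw [hy, Function.update_self, hB0c] at hlt
          exact lt_irrefl _ hlt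
        have hlt2 : (∑ B ∈ O.attach, (Finset.univ.filter
              fun l : Fin 3 => y l < a B.1 B.2 l ∧ a B.1 B.2 l ≤ q l).card) <
            ∑ B ∈ O.attach, (Finset.univ.filter
              fun l : Fin 3 => x l < a B.1 B.2 l ∧ a B.1 B.2 l ≤ q l).card :=
          Finset.sum_lt_sum (fun B _ => Finset.card_le_card (h2sub B))
            ⟨B0, Finset.mem_attach _ _, Finset.card_lt_card
              ((Finset.ssubset_iff_of_subset (h2sub B0)).2 ⟨d, hdx, hdy⟩)⟩
        have hle1 := Finset.card_le_card h1sub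
        omega
    obtain ⟨w, γ', hyw, hwq, hwfree, hwcorn, hγcont, hγmono, hγ0, hγ1, hγfree⟩ :=
      ih y hNdec hyfree hyq
    -- build the combined path
    set lin : ℝ → ℝ := fun t => x d + (max 0 (min (2*t) 1)) * (c - x d) with hlin
    have hfac01 : ∀ t : ℝ, 0 ≤ max 0 (min (2*t) 1) ∧ max 0 (min (2*t) 1) ≤ 1 :=
      fun t => ⟨le_max_left _ _, max_le (by norm_num) (min_le_right _ _)⟩
    have hlinmono : Monotone lin := by
      intro s t hst
      have h1 : max 0 (min (2*s) 1) ≤ max 0 (min (2*t) 1) :=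
        max_le_max le_rfl (min_le_min (by linarith) le_rfl)
      have h2 : (0:ℝ) ≤ c - x d := by linarith
      exact add_le_add_right (mul_le_mul_of_nonneg_right h1 h2) _
    have hlinlb : ∀ t, x d ≤ lin t := by
      intro t
      simp only [hlin]
      nlinarith [(hfac01 t).1, hxc]
    have hlinub : ∀ t, lin t ≤ c := by
      intro t
      simp only [hlin]
      nlinarith [(hfac01 t).2, hxc]
    have hlin0 : lin 0 = x d := by norm_num [hlin]
    have hlinhalf : lin (1/2 : ℝ) = c := by norm_num [hlin]
    have hlincont : Continuous lin := by
      simp only [hlin]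
      exact continuous_const.add ((continuous_const.max
        ((continuous_const.mul continuous_id).min continuous_const)).mul continuous_const)
    set γ : ℝ → Pt 3 := fun t => if t ≤ 1/2 then Function.update x d (lin t)
      else γ' (2*t - 1) with hγ
    have hc1 : Continuous fun t => Function.update x d (lin t) := by
      apply continuous_pi
      intro l
      by_cases hl : l = d
      · subst hl
        simp only [Function.update_self]
        exact hlincont
      · simp only [Function.update_of_ne hl]
        exact continuous_const
    have hc2 : Continuous fun t : ℝ => γ' (2*t - 1) :=
      hγcont.comp ((continuous_const.mul continuous_id).sub continuous_const)
    have hγcont2 : Continuous γ := by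
      simp only [hγ]
      apply Continuous.if_le hc1 hc2 continuous_id continuous_const
      intro t ht
      have ht' : t = 1/2 := ht
      subst ht'
      rw [hlinhalf]
      have h0 : (2*(1/2:ℝ) - 1) = 0 := by norm_num
      rw [h0, hγ0, hy]
    have hγmono2 : ∀ l, Monotone fun t => γ t l := by
      intro l
      have hyl : ∀ s : ℝ, Function.update x d (lin s) l ≤ y l := by
        intro s
        by_cases hl : l = d
        · subst hl
          rw [Function.update_self, hy, Function.update_self]
          exact hlinub s
        · rw [Function.update_of_ne hl, hy, Function.update_of_ne hl]
      intro s t hst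
      simp only [hγ]
      by_cases hs : s ≤ 1/2 <;> by_cases ht : t ≤ 1/2
      · rw [if_pos hs, if_pos ht]
        by_cases hl : l = d
        · subst hl
          rw [Function.update_self, Function.update_self]
          exact hlinmono hst
        · rw [Function.update_of_ne hl, Function.update_of_ne hl]
      · rw [if_pos hs, if_neg ht]
        refine (hyl s).trans ?_
        rw [← hγ0]
        exact hγmono l (by linarith : (0:ℝ) ≤ 2*t - 1)
      · exact absurd (hst.trans ht) hs
      · rw [if_neg hs, if_neg ht]
        exact hγmono l (by linarith : 2*s - 1 ≤ 2*t - 1)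
    have hγ0' : γ 0 = x := by
      simp only [hγ]
      rw [if_pos (by norm_num : (0:ℝ) ≤ 1/2), hlin0, Function.update_eq_self]
    have hγ1' : γ 1 = w := by
      simp only [hγ]
      rw [if_neg (by norm_num : ¬ (1:ℝ) ≤ 1/2)]
      have h1 : (2*(1:ℝ) - 1) = 1 := by norm_num
      rw [h1, hγ1]
    have hγfree' : ∀ t ∈ Set.Icc (0:ℝ) 1, γ t ∈ free O := by
      rintro t ⟨ht0, ht1⟩
      simp only [hγ]
      by_cases ht : t ≤ 1/2
      · rw [if_pos ht]
        exact hseg (lin t) (hlinlb t) (hlinub t)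
      · rw [if_neg ht]
        exact hγfree (2*t - 1) ⟨by linarith, by linarith⟩
    exact ⟨w, γ, hxy.trans hyw, hwq, hwfree, hwcorn, hγcont2, hγmono2, hγ0', hγ1', hγfree'⟩

/-- from any o ∈ B(p,q) outside all obstacle interiors (with
p ≤ q componentwise) there is a point w on one of the three edges of B(p,q)
incident to q (i.e. w ∈ B(p,q) with at least two coordinates equal to those of
q), outside all obstacle interiors, with σ₁(o,w) ≤ ‖o − q‖₁. -/
theorem statement_11 (O : Finset (Set (Pt 3))) (hO : IsObstacleFamily O)
    (p q : Pt 3) (hpq : p ≤ q)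
    (o : Pt 3) (hobox : o ∈ corners p q) (hofree : o ∈ free O) :
    ∃ w : Pt 3, w ∈ corners p q ∧ w ∈ free O ∧
      (∃ i j : Fin 3, i ≠ j ∧ w i = q i ∧ w j = q j) ∧
      geo nrm1 (free O) o w ≤ ENNReal.ofReal (nrm1 (o - q)) := by
  rw [corners, Set.uIcc_of_le hpq, Set.mem_Icc] at hobox
  obtain ⟨hpo, hoq⟩ := hobox
  obtain ⟨w, γ, how, hwq, hwfree, hwcorn, hcont, hmono, h0, h1, hfr⟩ :=
    key_lemma O hO q o hofree hoq
  refine ⟨w, ?_, hwfree, hwcorn, ?_⟩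
  · rw [corners, Set.uIcc_of_le hpq, Set.mem_Icc]
    exact ⟨hpo.trans how, hwq⟩
  · have h2 : geo nrm1 (free O) o w ≤ pathLen nrm1 γ :=
      iInf₂_le γ ⟨hcont.continuousOn, h0, h1, hfr⟩
    refine h2.trans ((pathLen_le_of_coord_mono hmono).trans ?_)
    apply ENNReal.ofReal_le_ofReal
    rw [h0, h1]
    unfold nrm1
    refine Finset.sum_le_sum fun l _ => ?_
    rw [Pi.sub_apply, abs_of_nonpos (by linarith [hoq l])]
    linarith [hwq l]

end GeoSpanner
end

section
/- Let O = [a₁,b₁] × [a₂,b₂] × [a₃,b₃] be a closed axis-parallel box in ℝ³, and let p, q ∈ ℝ³ be points not in the interior of O. Let o ∈ B(p,q) ∩ O. For each coordinate i ∈ {1,2,3}, let o_{i+} (resp. o_{i−}) be the point obtained from o by replacing its i-th coordinate with bᵢ (resp. aᵢ). Then at least one of the six points o_{1+}, o_{1−}, o_{2+}, o_{2−}, o_{3+}, o_{3−} lies in B(p,q). -/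
open scoped ENNReal

namespace GeoSpanner

/-- if p, q avoid the interior of the box O = Icc a b and
o ∈ B(p,q) ∩ O, then one of the six axis-projections of o onto the boundary
facets of O lies in B(p,q). -/
theorem statement_12 (a b : Pt 3) (hab : a ≤ b) (p q : Pt 3)
    (hp : p ∉ interior (Set.Icc a b)) (hq : q ∉ interior (Set.Icc a b))
    (o : Pt 3) (ho : o ∈ corners p q ∩ Set.Icc a b) :
    ∃ i : Fin 3,
      Function.update o i (b i) ∈ corners p q ∨
      Function.update o i (a i) ∈ corners p q := by
  obtain ⟨ho1, ho2⟩ := ho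
  have hI : interior (Set.Icc a b) = Set.pi Set.univ fun i => Set.Ioo (a i) (b i) := by
    rw [← Set.pi_univ_Icc, interior_pi_set Set.finite_univ]
    simp
  rw [hI] at hp
  simp only [Set.mem_pi, Set.mem_univ, forall_true_left, not_forall, Set.mem_Ioo,
    not_and_or, not_lt] at hp
  obtain ⟨i, hi⟩ := hp
  rw [corners, Set.uIcc, Set.mem_Icc] at ho1
  have hlo : ∀ k, min (p k) (q k) ≤ o k := fun k => ho1.1 k
  have hhi : ∀ k, o k ≤ max (p k) (q k) := fun k => ho1.2 k
  refine ⟨i, ?_⟩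
  rcases hi with hi | hi
  · -- p i ≤ a i, use a i
    right
    rw [corners, Set.uIcc, Set.mem_Icc]
    constructor <;> intro k <;> by_cases hk : k = i
    · subst hk
      simpa using le_trans inf_le_left hi
    · simpa [Function.update_of_ne hk] using hlo k
    · subst hk
      simpa using le_trans (ho2.1 k) (hhi k)
    · simpa [Function.update_of_ne hk] using hhi k
  · -- b i ≤ p i, use b i
    left
    rw [corners, Set.uIcc, Set.mem_Icc]
    constructor <;> intro k <;> by_cases hk : k = i
    · subst hk
      simpa using le_trans (hlo k) (ho2.2 k)
    · simpa [Function.update_of_ne hk] using hlo k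
    · subst hk
      simpa using le_trans hi le_sup_left
    · simpa [Function.update_of_ne hk] using hhi k

end GeoSpanner
end
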